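/- Let ≻ be a hope-and-prepare preference with representation (u, C, D), and let ≻* be a binary relation on F. The following are equivalent: (i) ≻* is invariant biseparable and extends ≻; (ii) there exists α ∈ [0,1] such that for all f,g ∈ F, f ≻* g iff α·min_{p∈C}∫u(f)dp + (1-α)·max_{p∈D}∫u(f)dp > α·min_{p∈C}∫u(g)dp + (1-α)·max_{p∈D}∫u(g)dp. Moreover, if ≻ is not complete (i.e. there exists f ∈ F with min_{p∈C}∫u(f)dp < max_{p∈D}∫u(f)dp), then the weight α in (ii) is unique. -/

import Mathlib

/-!
Framework: Anscombe–Aumann acts, finitely additive probability measures,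
simple acts, hope-and-prepare preferences (Bastianello–Hill style setup).
-/

open Set

section Framework

variable (S : Type*) [MeasurableSpace S]

/-- The measurable sets (events) of `S`, as a subtype. -/
abbrev MSet := {A : Set S // MeasurableSet A}

/-- Finitely additive probability measures on `(S, Σ)`, viewed as real-valued
set functions on events.  The weak* topology is the topology of pointwise
convergence on events, i.e. the product topology on `MSet S → ℝ`. -/
def ProbCharges : Set (MSet S → ℝ) :=
  {p | (∀ A, 0 ≤ p A) ∧ p ⟨Set.univ, MeasurableSet.univ⟩ = 1 ∧
    ∀ A B : MSet S, Disjoint A.1 B.1 → p ⟨A.1 ∪ B.1, A.2.union B.2⟩ = p A + p B}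

end Framework

section Fns

variable {S : Type*} [MeasurableSpace S]

/-- `φ : S → ℝ` is a measurable simple function (an element of `B₀(Σ)`). -/
def IsSimpleFn (φ : S → ℝ) : Prop :=
  (Set.range φ).Finite ∧ ∀ y : ℝ, MeasurableSet (φ ⁻¹' {y})

/-- The integral `∫ φ dp` of a simple function `φ` against a finitely additive
measure `p` (junk value `0` if `φ` is not simple). -/
noncomputable def fInt (p : MSet S → ℝ) (φ : S → ℝ) : ℝ :=
  @dite _ (IsSimpleFn φ) (Classical.dec _)
    (fun h => ∑ y ∈ h.1.toFinset, y * p ⟨φ ⁻¹' {y}, h.2 y⟩) (fun _ => 0)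

/-- A functional `I : B₀(Σ) → ℝ` is monotonic. -/
def MonotonicFn (I : (S → ℝ) → ℝ) : Prop :=
  ∀ φ ψ, IsSimpleFn φ → IsSimpleFn ψ → (∀ s, φ s ≤ ψ s) → I φ ≤ I ψ

/-- A functional `I : B₀(Σ) → ℝ` is constant-linear: `I(aφ + b) = a I(φ) + b`
for `a ≥ 0`, `b ∈ ℝ`. -/
def ConstLinearFn (I : (S → ℝ) → ℝ) : Prop :=
  ∀ φ, IsSimpleFn φ → ∀ a : ℝ, 0 ≤ a → ∀ b : ℝ,
    I (fun s => a * φ s + b) = a * I φ + b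

end Fns

section Acts

variable {S : Type*} [MeasurableSpace S] {V : Type*} [AddCommGroup V] [Module ℝ V]

/-- `f : S → V` is a simple act with outcomes in `X`: it is `X`-valued,
takes finitely many values and is `Σ`-measurable. -/
def IsAct (X : Set V) (f : S → V) : Prop :=
  (∀ s, f s ∈ X) ∧ (Set.range f).Finite ∧ ∀ v : V, MeasurableSet (f ⁻¹' {v})

/-- Pointwise mixture `αf + (1-α)g` of two acts. -/
def mixAct (α : ℝ) (f g : S → V) : S → V := fun s => α • f s + (1 - α) • g s

/-- The constant act with outcome `x`. -/
def constAct (S : Type*) {V : Type*} (x : V) : S → V := fun _ => x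

/-- `u : V → ℝ` is affine on the convex set `X`. -/
def IsAffineOn (u : V → ℝ) (X : Set V) : Prop :=
  ∀ x ∈ X, ∀ y ∈ X, ∀ α : ℝ, 0 ≤ α → α ≤ 1 →
    u (α • x + (1 - α) • y) = α * u x + (1 - α) * u y

/-- `u` is non-constant on `X`. -/
def NonConstOn (u : V → ℝ) (X : Set V) : Prop := ∃ x ∈ X, ∃ y ∈ X, u x ≠ u y

/-- Expected utility `∫ u(f) dp` of the act `f` under the measure `p`. -/
noncomputable def EU (u : V → ℝ) (f : S → V) (p : MSet S → ℝ) : ℝ :=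
  fInt p (fun s => u (f s))

/-- Worst-case expected utility of `f` over the set of scenarios `C`. -/
noncomputable def minEU (u : V → ℝ) (C : Set (MSet S → ℝ)) (f : S → V) : ℝ :=
  sInf (EU u f '' C)

/-- Best-case expected utility of `f` over the set of scenarios `D`. -/
noncomputable def maxEU (u : V → ℝ) (D : Set (MSet S → ℝ)) (f : S → V) : ℝ :=
  sSup (EU u f '' D)

/-- `f` and `g` are incomparable (`f ⋈ g`). -/
def Incomp (R : (S → V) → (S → V) → Prop) (f g : S → V) : Prop := ¬ R f g ∧ ¬ R g f

end Acts

section Axioms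

variable {S : Type*} [MeasurableSpace S] {V : Type*} [AddCommGroup V] [Module ℝ V]
variable (X : Set V) (R : (S → V) → (S → V) → Prop)

/-- Axiom 1: `≻` is asymmetric and transitive on acts, and its restriction to
constant acts is non-trivial and negatively transitive. -/
def PrefAx1 : Prop :=
  (∀ f g, IsAct X f → IsAct X g → R f g → ¬ R g f) ∧
  (∀ f g h, IsAct X f → IsAct X g → IsAct X h → R f g → R g h → R f h) ∧
  (∃ x ∈ X, ∃ y ∈ X, R (constAct S x) (constAct S y)) ∧
  (∀ x ∈ X, ∀ y ∈ X, ∀ z ∈ X, ¬ R (constAct S x) (constAct S y) →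
    ¬ R (constAct S y) (constAct S z) → ¬ R (constAct S x) (constAct S z))

/-- Axiom 2 (continuity). -/
def PrefAx2 : Prop :=
  ∀ f g h, IsAct X f → IsAct X g → IsAct X h →
    IsOpen {α : Set.Icc (0 : ℝ) 1 | R (mixAct (α : ℝ) f g) h} ∧
    IsOpen {α : Set.Icc (0 : ℝ) 1 | R h (mixAct (α : ℝ) f g)}

/-- Axiom 3 (certainty independence). -/
def PrefAx3 : Prop :=
  ∀ f g, IsAct X f → IsAct X g → ∀ x ∈ X, ∀ α : ℝ, 0 < α → α < 1 →
    (R f g ↔ R (mixAct α f (constAct S x)) (mixAct α g (constAct S x)))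

/-- Axiom 4: for any outcome `x`, the upper and lower contour sets at the
constant act `x` are convex. -/
def PrefAx4 : Prop :=
  ∀ x ∈ X,
    (∀ f g, IsAct X f → IsAct X g → R f (constAct S x) → R g (constAct S x) →
      ∀ α : ℝ, 0 ≤ α → α ≤ 1 → R (mixAct α f g) (constAct S x)) ∧
    (∀ f g, IsAct X f → IsAct X g → R (constAct S x) f → R (constAct S x) g →
      ∀ α : ℝ, 0 ≤ α → α ≤ 1 → R (constAct S x) (mixAct α f g))

/-- Axiom 5 (monotonicity). -/
def PrefAx5 : Prop :=
  ∀ f g, IsAct X f → IsAct X g →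
    (∀ s : S, R (constAct S (f s)) (constAct S (g s))) → R f g

/-- Axiom 6: if every outcome incomparable to `f` is incomparable to `g`,
then `f` and `g` are incomparable. -/
def PrefAx6 : Prop :=
  ∀ f g, IsAct X f → IsAct X g →
    (∀ x ∈ X, Incomp R f (constAct S x) → Incomp R g (constAct S x)) → Incomp R f g

/-- Axiom 7: if `f ⋈ x`, `x ≻ g`, `g ⋈ y` and `f ≻ y`, then `f ≻ g`. -/
def PrefAx7 : Prop :=
  ∀ f g, IsAct X f → IsAct X g → ∀ x ∈ X, ∀ y ∈ X,
    Incomp R f (constAct S x) → R (constAct S x) g →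
    Incomp R g (constAct S y) → R f (constAct S y) → R f g

end Axioms

section Reps

variable {S : Type*} [MeasurableSpace S] {V : Type*} [AddCommGroup V] [Module ℝ V]

/-- `(u, C, D)` is a hope-and-prepare representation of `R`. -/
def IsHPRep (X : Set V) (R : (S → V) → (S → V) → Prop) (u : V → ℝ)
    (C D : Set (MSet S → ℝ)) : Prop :=
  IsAffineOn u X ∧ NonConstOn u X ∧
  C.Nonempty ∧ D.Nonempty ∧ C ⊆ ProbCharges S ∧ D ⊆ ProbCharges S ∧
  IsCompact C ∧ IsCompact D ∧ Convex ℝ C ∧ Convex ℝ D ∧ (C ∩ D).Nonempty ∧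
  ∀ f g, IsAct X f → IsAct X g →
    (R f g ↔ (minEU u C g < minEU u C f ∧ maxEU u D g < maxEU u D f))

/-- `(u, C)` is a Bewley representation of `R`. -/
def IsBewleyRep (X : Set V) (R : (S → V) → (S → V) → Prop) (u : V → ℝ)
    (C : Set (MSet S → ℝ)) : Prop :=
  IsAffineOn u X ∧ NonConstOn u X ∧
  C.Nonempty ∧ C ⊆ ProbCharges S ∧ IsCompact C ∧ Convex ℝ C ∧
  ∀ f g, IsAct X f → IsAct X g → (R f g ↔ ∀ p ∈ C, EU u g p < EU u f p)

/-- `(u, C, D)` is a twofold multi-prior representation of `R`. -/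
def IsTwofoldRep (X : Set V) (R : (S → V) → (S → V) → Prop) (u : V → ℝ)
    (C D : Set (MSet S → ℝ)) : Prop :=
  IsAffineOn u X ∧ NonConstOn u X ∧
  C.Nonempty ∧ D.Nonempty ∧ C ⊆ ProbCharges S ∧ D ⊆ ProbCharges S ∧
  IsCompact C ∧ IsCompact D ∧ Convex ℝ C ∧ Convex ℝ D ∧ (C ∩ D).Nonempty ∧
  ∀ f g, IsAct X f → IsAct X g → (R f g ↔ maxEU u D g < minEU u C f)

end Reps

section Statement

variable {S : Type*} [MeasurableSpace S] [Nonempty S]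
variable {V : Type*} [AddCommGroup V] [Module ℝ V]

/-- A relation on `F` is invariant biseparable: asymmetric, negatively
transitive, and satisfies Axioms 2, 3 and 5. -/
def InvBiseparable (X : Set V) (R : (S → V) → (S → V) → Prop) : Prop :=
  (∀ f g, IsAct X f → IsAct X g → R f g → ¬ R g f) ∧
  (∀ f g h, IsAct X f → IsAct X g → IsAct X h → ¬ R f g → ¬ R g h → ¬ R f h) ∧
  PrefAx2 X R ∧ PrefAx3 X R ∧ PrefAx5 X R

/-- The asymmetric `α`-maxmin evaluation of an act. -/
noncomputable def alphaVal (u : V → ℝ) (C D : Set (MSet S → ℝ)) (α : ℝ)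
    (f : S → V) : ℝ :=
  α * minEU u C f + (1 - α) * maxEU u D f

set_option linter.unusedSectionVars false

/-- Simple measurable map into an arbitrary type. -/
def SimpleMeas {W : Type*} (g : S → W) : Prop :=
  (Set.range g).Finite ∧ ∀ w : W, MeasurableSet (g ⁻¹' {w})

section pbasics
variable {p : MSet S → ℝ} (hp : p ∈ ProbCharges S)

lemma p_congr (p : MSet S → ℝ) {A B : Set S} (hA : MeasurableSet A) (hB : MeasurableSet B)
    (h : A = B) : p ⟨A, hA⟩ = p ⟨B, hB⟩ := by
  cases h; rfl

include hp

lemma p_empty : p ⟨∅, MeasurableSet.empty⟩ = 0 := by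
  have h := hp.2.2 ⟨∅, MeasurableSet.empty⟩ ⟨∅, MeasurableSet.empty⟩ (by simp)
  have h2 : p ⟨(∅ : Set S) ∪ ∅, MeasurableSet.empty.union MeasurableSet.empty⟩
      = p ⟨∅, MeasurableSet.empty⟩ := p_congr p _ _ (by simp)
  rw [h2] at h; linarith

lemma p_biUnion {ι : Type*} (t : Finset ι) (A : ι → Set S) (hA : ∀ i, MeasurableSet (A i))
    (hd : ∀ i ∈ t, ∀ j ∈ t, i ≠ j → Disjoint (A i) (A j)) :
    p ⟨⋃ i ∈ t, A i, MeasurableSet.biUnion t.countable_toSet (fun i _ => hA i)⟩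
      = ∑ i ∈ t, p ⟨A i, hA i⟩ := by
  classical
  induction t using Finset.induction_on with
  | empty => simpa using p_empty hp
  | @insert a s hnotmem ih =>
    have hdisj : Disjoint (A a) (⋃ i ∈ s, A i) := by
      rw [Set.disjoint_iUnion₂_right]
      intro i hi
      exact hd a (Finset.mem_insert_self a s) i (Finset.mem_insert_of_mem hi)
        (fun h => hnotmem (h ▸ hi))
    have hU : MeasurableSet (⋃ i ∈ s, A i) :=
      MeasurableSet.biUnion s.countable_toSet (fun i _ => hA i)
    have h1 : p ⟨⋃ i ∈ insert a s, A i,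
        MeasurableSet.biUnion (insert a s).countable_toSet (fun i _ => hA i)⟩
        = p ⟨A a ∪ ⋃ i ∈ s, A i, (hA a).union hU⟩ :=
      p_congr p _ _ (by simp [Set.biUnion_insert])
    rw [h1, hp.2.2 ⟨A a, hA a⟩ ⟨⋃ i ∈ s, A i, hU⟩ hdisj, Finset.sum_insert hnotmem,
      ih (fun i hi j hj hij => hd i (Finset.mem_insert_of_mem hi) j
        (Finset.mem_insert_of_mem hj) hij)]

end pbasics

section fIntLemmas
variable {p : MSet S → ℝ}

lemma fInt_eq (hp : p ∈ ProbCharges S) {φ : S → ℝ} (hφ : IsSimpleFn φ) (T : Finset ℝ)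
    (hT : Set.range φ ⊆ ↑T) :
    fInt p φ = ∑ y ∈ T, y * p ⟨φ ⁻¹' {y}, hφ.2 y⟩ := by
  rw [fInt, dif_pos hφ]
  refine Finset.sum_subset (fun y hy => ?_) (fun y _ hy => ?_)
  · exact hT (hφ.1.mem_toFinset.mp hy)
  · have hemp : φ ⁻¹' {y} = ∅ := by
      ext s; simp only [Set.mem_preimage, Set.mem_singleton_iff, Set.mem_empty_iff_false,
        iff_false]
      intro h; exact hy (hφ.1.mem_toFinset.mpr ⟨s, h⟩)
    rw [p_congr p _ MeasurableSet.empty hemp, p_empty hp, mul_zero]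
end fIntLemmas
variable {p : MSet S → ℝ}

lemma simpleMeas_comp {W W' : Type*} {G : S → W} (hG : SimpleMeas G) (k : W → W') :
    SimpleMeas (fun s => k (G s)) := by
  classical
  constructor
  · exact (hG.1.image k).subset (by rintro _ ⟨s, rfl⟩; exact ⟨G s, ⟨s, rfl⟩, rfl⟩)
  · intro w'
    have heq : (fun s => k (G s)) ⁻¹' {w'}
        = ⋃ w ∈ hG.1.toFinset.filter (fun w => k w = w'), G ⁻¹' {w} := by
      ext s
      simp only [Set.mem_preimage, Set.mem_singleton_iff, Set.mem_iUnion, Finset.mem_filter,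
        Set.Finite.mem_toFinset, exists_prop]
      constructor
      · intro h; exact ⟨G s, ⟨⟨s, rfl⟩, h⟩, rfl⟩
      · rintro ⟨w, ⟨_, hw⟩, rfl⟩; exact hw
    rw [heq]
    exact (hG.1.toFinset.filter _).measurableSet_biUnion (fun w _ => hG.2 w)

lemma simpleMeas_pair {f g : S → V} (hf : SimpleMeas f) (hg : SimpleMeas g) :
    SimpleMeas (fun s => (f s, g s)) := by
  constructor
  · exact (hf.1.prod hg.1).subset (by rintro _ ⟨s, rfl⟩; exact ⟨⟨s, rfl⟩, ⟨s, rfl⟩⟩)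
  · intro ⟨a, b⟩
    have heq : (fun s => (f s, g s)) ⁻¹' {(a, b)} = f ⁻¹' {a} ∩ g ⁻¹' {b} := by
      ext s; simp [Prod.ext_iff]
    rw [heq]; exact (hf.2 a).inter (hg.2 b)

lemma isAct_simpleMeas {X : Set V} {f : S → V} (hf : IsAct X f) : SimpleMeas f :=
  ⟨hf.2.1, hf.2.2⟩

lemma isAct_const {X : Set V} {x : V} (hx : x ∈ X) : IsAct X (constAct S x) := by
  refine ⟨fun _ => hx, (Set.finite_singleton x).subset (by rintro _ ⟨s, rfl⟩; rfl), fun v => ?_⟩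
  by_cases h : x = v
  · have : constAct S x ⁻¹' {v} = Set.univ := by ext s; simp [constAct, h]
    rw [this]; exact MeasurableSet.univ
  · have : constAct S x ⁻¹' {v} = ∅ := by ext s; simp [constAct, h]
    rw [this]; exact MeasurableSet.empty

lemma isAct_mix {X : Set V} (hX : Convex ℝ X) {f g : S → V} (hf : IsAct X f) (hg : IsAct X g)
    {t : ℝ} (ht0 : 0 ≤ t) (ht1 : t ≤ 1) : IsAct X (mixAct t f g) := by
  have hsm : SimpleMeas (mixAct t f g) :=
    simpleMeas_comp (simpleMeas_pair (isAct_simpleMeas hf) (isAct_simpleMeas hg))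
      (fun ab => t • ab.1 + (1 - t) • ab.2)
  exact ⟨fun s => hX (hf.1 s) (hg.1 s) ht0 (by linarith) (by ring), hsm.1, hsm.2⟩

/-- The key representation of `fInt` of a composition as a sum over fibers. -/
lemma fInt_comp (hp : p ∈ ProbCharges S) {W : Type*} {G : S → W} (hG : SimpleMeas G)
    (k : W → ℝ) (T : Finset W) (hT : Set.range G ⊆ ↑T) :
    fInt p (fun s => k (G s)) = ∑ w ∈ T, k w * p ⟨G ⁻¹' {w}, hG.2 w⟩ := by
  classical
  have hs : IsSimpleFn (fun s => k (G s)) := simpleMeas_comp hG k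
  rw [fInt_eq hp hs (T.image k)
    (by rintro _ ⟨s, rfl⟩; exact Finset.mem_coe.mpr (Finset.mem_image_of_mem k (hT ⟨s, rfl⟩)))]
  have hfib : ∀ y : ℝ, p ⟨(fun s => k (G s)) ⁻¹' {y}, hs.2 y⟩
      = ∑ w ∈ T.filter (fun w => k w = y), p ⟨G ⁻¹' {w}, hG.2 w⟩ := by
    intro y
    have heq : (fun s => k (G s)) ⁻¹' {y} = ⋃ w ∈ T.filter (fun w => k w = y), G ⁻¹' {w} := by
      ext s
      simp only [Set.mem_preimage, Set.mem_singleton_iff, Set.mem_iUnion, Finset.mem_filter,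
        exists_prop]
      constructor
      · intro h; exact ⟨G s, ⟨Finset.mem_coe.mp (hT ⟨s, rfl⟩), h⟩, rfl⟩
      · rintro ⟨w, ⟨_, hw⟩, rfl⟩; exact hw
    rw [p_congr p _ (MeasurableSet.biUnion (T.filter _).countable_toSet (fun w _ => hG.2 w)) heq]
    exact p_biUnion hp _ _ _ (fun i _ j _ hij => by
      rw [Set.disjoint_left]; rintro s hs1 hs2
      exact hij (by rw [← hs1, ← hs2]))
  calc ∑ y ∈ T.image k, y * p ⟨(fun s => k (G s)) ⁻¹' {y}, hs.2 y⟩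
      = ∑ y ∈ T.image k, ∑ w ∈ T.filter (fun w => k w = y), k w * p ⟨G ⁻¹' {w}, hG.2 w⟩ := by
        refine Finset.sum_congr rfl (fun y _ => ?_)
        rw [hfib y, Finset.mul_sum]
        exact Finset.sum_congr rfl (fun w hw => by rw [(Finset.mem_filter.mp hw).2])
    _ = ∑ w ∈ T, k w * p ⟨G ⁻¹' {w}, hG.2 w⟩ :=
        Finset.sum_fiberwise_of_maps_to (fun w hw => Finset.mem_image_of_mem k hw) _

lemma sum_fibers_one (hp : p ∈ ProbCharges S) {W : Type*} {G : S → W} (hG : SimpleMeas G)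
    (T : Finset W) (hT : Set.range G ⊆ ↑T) :
    ∑ w ∈ T, p ⟨G ⁻¹' {w}, hG.2 w⟩ = 1 := by
  have h1 : fInt p (fun s => (1 : ℝ)) = ∑ w ∈ T, 1 * p ⟨G ⁻¹' {w}, hG.2 w⟩ :=
    fInt_comp hp hG (fun _ => 1) T hT
  have h2 : fInt p (fun s => (1 : ℝ)) = 1 := by
    have hc : SimpleMeas (fun _ : S => (0 : ℝ)) := by
      constructor
      · exact (Set.finite_singleton 0).subset (by rintro _ ⟨s, rfl⟩; rfl)
      · intro w
        by_cases h : (0 : ℝ) = w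
        · have : (fun _ : S => (0:ℝ)) ⁻¹' {w} = Set.univ := by ext s; simp [h]
          rw [this]; exact MeasurableSet.univ
        · have : (fun _ : S => (0:ℝ)) ⁻¹' {w} = ∅ := by ext s; simp [h]
          rw [this]; exact MeasurableSet.empty
    have h3 : fInt p (fun s => (1 : ℝ))
        = ∑ w ∈ ({(0:ℝ)} : Finset ℝ), 1 * p ⟨(fun _ : S => (0:ℝ)) ⁻¹' {w}, hc.2 w⟩ :=
      fInt_comp hp hc (fun _ => 1) {0} (by rintro _ ⟨s, rfl⟩; simp)
    rw [h3, Finset.sum_singleton, one_mul,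
      p_congr p _ MeasurableSet.univ (by ext s; simp), hp.2.1]
  rw [← h2, h1]; exact Finset.sum_congr rfl (fun w _ => by rw [one_mul])
section EULemmas
variable {p : MSet S → ℝ} {X : Set V} {u : V → ℝ}

lemma EU_const (hp : p ∈ ProbCharges S) (x : V) : EU u (constAct S x) p = u x := by
  have hc : SimpleMeas (constAct S x) := isAct_simpleMeas (X := Set.univ)
    ⟨fun _ => Set.mem_univ x, (isAct_const (Set.mem_univ x)).2⟩
  have h : EU u (constAct S x) p
      = ∑ w ∈ ({x} : Finset V), u w * p ⟨constAct S x ⁻¹' {w}, hc.2 w⟩ :=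
    fInt_comp hp hc u {x} (by rintro _ ⟨s, rfl⟩; simp [constAct])
  rw [h, Finset.sum_singleton, p_congr p _ MeasurableSet.univ (by ext s; simp [constAct]),
    hp.2.1, mul_one]

/-- Pointwise comparison of compositions gives comparison of integrals. -/
lemma fInt_comp_le (hp : p ∈ ProbCharges S) {W : Type*} {G : S → W} (hG : SimpleMeas G)
    (k₁ k₂ : W → ℝ) (h : ∀ s, k₁ (G s) ≤ k₂ (G s)) :
    fInt p (fun s => k₁ (G s)) ≤ fInt p (fun s => k₂ (G s)) := by
  classical
  rw [fInt_comp hp hG k₁ hG.1.toFinset (fun y hy => hG.1.mem_toFinset.mpr hy),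
    fInt_comp hp hG k₂ hG.1.toFinset (fun y hy => hG.1.mem_toFinset.mpr hy)]
  refine Finset.sum_le_sum (fun w hw => ?_)
  obtain ⟨s, rfl⟩ := hG.1.mem_toFinset.mp hw
  exact mul_le_mul_of_nonneg_right (h s) (hp.1 _)

lemma fInt_const (hp : p ∈ ProbCharges S) {W : Type*} {G : S → W} (hG : SimpleMeas G)
    (c : ℝ) : fInt p (fun _ : S => c) = c := by
  have h : fInt p (fun _ : S => c) = ∑ w ∈ hG.1.toFinset, c * p ⟨G ⁻¹' {w}, hG.2 w⟩ :=
    fInt_comp hp hG (fun _ => c) hG.1.toFinset (fun y hy => hG.1.mem_toFinset.mpr hy)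
  rw [h, ← Finset.mul_sum,
    sum_fibers_one hp hG _ (fun y hy => hG.1.mem_toFinset.mpr hy), mul_one]

lemma EU_bounds (hp : p ∈ ProbCharges S) {f : S → V} (hf : IsAct X f) {lo hi : ℝ}
    (hlo : ∀ s, lo ≤ u (f s)) (hhi : ∀ s, u (f s) ≤ hi) :
    lo ≤ EU u f p ∧ EU u f p ≤ hi := by
  have hG := isAct_simpleMeas hf
  constructor
  · calc lo = fInt p (fun _ : S => lo) := (fInt_const hp hG lo).symm
      _ ≤ fInt p (fun s => u (f s)) := fInt_comp_le hp hG (fun _ => lo) u hlo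
  · calc EU u f p ≤ fInt p (fun _ : S => hi) := fInt_comp_le hp hG u (fun _ => hi) hhi
      _ = hi := fInt_const hp hG hi

lemma EU_add_const_le (hp : p ∈ ProbCharges S) {f g : S → V} (hf : IsAct X f) (hg : IsAct X g)
    {ε : ℝ} (h : ∀ s, u (g s) + ε ≤ u (f s)) : EU u g p + ε ≤ EU u f p := by
  have hpair := simpleMeas_pair (isAct_simpleMeas hf) (isAct_simpleMeas hg)
  set T := hpair.1.toFinset with hTdef
  have hTsub : Set.range (fun s => (f s, g s)) ⊆ ↑T := fun y hy => hpair.1.mem_toFinset.mpr hy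
  have h2 : fInt p (fun s => u (g s) + ε)
      = ∑ w ∈ T, (u w.2 + ε) * p ⟨(fun s => (f s, g s)) ⁻¹' {w}, hpair.2 w⟩ :=
    fInt_comp hp hpair (fun ab => u ab.2 + ε) T hTsub
  have h3 : EU u g p = ∑ w ∈ T, u w.2 * p ⟨(fun s => (f s, g s)) ⁻¹' {w}, hpair.2 w⟩ :=
    fInt_comp hp hpair (fun ab => u ab.2) T hTsub
  have h4 : fInt p (fun s => u (g s) + ε) ≤ EU u f p :=
    fInt_comp_le hp hpair (fun ab => u ab.2 + ε) (fun ab => u ab.1) h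
  have h5 : EU u g p + ε = fInt p (fun s => u (g s) + ε) := by
    have hone : ∑ w ∈ T, p ⟨(fun s => (f s, g s)) ⁻¹' {w}, hpair.2 w⟩ = 1 :=
      sum_fibers_one hp hpair T hTsub
    have hsplit : ∑ w ∈ T, (u w.2 + ε) * p ⟨(fun s => (f s, g s)) ⁻¹' {w}, hpair.2 w⟩
        = (∑ w ∈ T, u w.2 * p ⟨(fun s => (f s, g s)) ⁻¹' {w}, hpair.2 w⟩)
          + ε * ∑ w ∈ T, p ⟨(fun s => (f s, g s)) ⁻¹' {w}, hpair.2 w⟩ := by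
      rw [Finset.mul_sum, ← Finset.sum_add_distrib]
      exact Finset.sum_congr rfl (fun w _ => by ring)
    rw [h2, h3, hsplit, hone, mul_one]
  rw [h5]; exact h4

lemma EU_mix (hp : p ∈ ProbCharges S) (hu : IsAffineOn u X) {f g : S → V}
    (hf : IsAct X f) (hg : IsAct X g) {t : ℝ} (ht0 : 0 ≤ t) (ht1 : t ≤ 1) :
    EU u (mixAct t f g) p = t * EU u f p + (1 - t) * EU u g p := by
  have hpair := simpleMeas_pair (isAct_simpleMeas hf) (isAct_simpleMeas hg)
  set T := hpair.1.toFinset with hTdef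
  have hTsub : Set.range (fun s => (f s, g s)) ⊆ ↑T := fun y hy => hpair.1.mem_toFinset.mpr hy
  have h1 : EU u (mixAct t f g) p
      = ∑ w ∈ T, u (t • w.1 + (1 - t) • w.2) * p ⟨(fun s => (f s, g s)) ⁻¹' {w}, hpair.2 w⟩ :=
    fInt_comp hp hpair (fun ab => u (t • ab.1 + (1 - t) • ab.2)) T hTsub
  have h2 : EU u f p = ∑ w ∈ T, u w.1 * p ⟨(fun s => (f s, g s)) ⁻¹' {w}, hpair.2 w⟩ :=
    fInt_comp hp hpair (fun ab => u ab.1) T hTsub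
  have h3 : EU u g p = ∑ w ∈ T, u w.2 * p ⟨(fun s => (f s, g s)) ⁻¹' {w}, hpair.2 w⟩ :=
    fInt_comp hp hpair (fun ab => u ab.2) T hTsub
  rw [h1, h2, h3, Finset.mul_sum, Finset.mul_sum, ← Finset.sum_add_distrib]
  refine Finset.sum_congr rfl (fun w hw => ?_)
  rcases Set.eq_empty_or_nonempty ((fun s => (f s, g s)) ⁻¹' {w}) with hemp | ⟨s, hs⟩
  · rw [p_congr p _ MeasurableSet.empty hemp, p_empty hp]; ring
  · simp only [Set.mem_preimage, Set.mem_singleton_iff] at hs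
    have hw1 : w.1 ∈ X := by rw [← hs]; exact hf.1 s
    have hw2 : w.2 ∈ X := by rw [← hs]; exact hg.1 s
    rw [hu w.1 hw1 w.2 hw2 t ht0 ht1]; ring

end EULemmas
section MinMaxEU
variable {X : Set V} {u : V → ℝ} {C D : Set (MSet S → ℝ)}

lemma act_argbounds {f : S → V} (hf : IsAct X f) (u : V → ℝ) :
    ∃ s₁ s₂ : S, (∀ s, u (f s₁) ≤ u (f s)) ∧ (∀ s, u (f s) ≤ u (f s₂)) := by
  classical
  have hfin : (Set.range fun s => u (f s)).Finite :=
    (hf.2.1.image u).subset (by rintro _ ⟨s, rfl⟩; exact ⟨f s, ⟨s, rfl⟩, rfl⟩)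
  have hne : hfin.toFinset.Nonempty := by
    obtain ⟨s⟩ := ‹Nonempty S›
    exact ⟨u (f s), hfin.mem_toFinset.mpr ⟨s, rfl⟩⟩
  obtain ⟨s₁, hs₁⟩ := hfin.mem_toFinset.mp (hfin.toFinset.min'_mem hne)
  obtain ⟨s₂, hs₂⟩ := hfin.mem_toFinset.mp (hfin.toFinset.max'_mem hne)
  have hs₁' : u (f s₁) = hfin.toFinset.min' hne := hs₁
  have hs₂' : u (f s₂) = hfin.toFinset.max' hne := hs₂
  refine ⟨s₁, s₂, fun s => ?_, fun s => ?_⟩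
  · rw [hs₁']; exact hfin.toFinset.min'_le _ (hfin.mem_toFinset.mpr ⟨s, rfl⟩)
  · rw [hs₂']; exact hfin.toFinset.le_max' _ (hfin.mem_toFinset.mpr ⟨s, rfl⟩)

lemma bddBelow_EU (hCP : C ⊆ ProbCharges S) {f : S → V} (hf : IsAct X f) :
    BddBelow (EU u f '' C) := by
  obtain ⟨s₁, s₂, h1, h2⟩ := act_argbounds hf u
  exact ⟨u (f s₁), by rintro _ ⟨q, hq, rfl⟩; exact (EU_bounds (hCP hq) hf h1 h2).1⟩

lemma bddAbove_EU (hCP : C ⊆ ProbCharges S) {f : S → V} (hf : IsAct X f) :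
    BddAbove (EU u f '' C) := by
  obtain ⟨s₁, s₂, h1, h2⟩ := act_argbounds hf u
  exact ⟨u (f s₂), by rintro _ ⟨q, hq, rfl⟩; exact (EU_bounds (hCP hq) hf h1 h2).2⟩

lemma minEU_le_EU (hCP : C ⊆ ProbCharges S) {f : S → V} (hf : IsAct X f)
    {p : MSet S → ℝ} (hp : p ∈ C) : minEU u C f ≤ EU u f p :=
  csInf_le (bddBelow_EU hCP hf) ⟨p, hp, rfl⟩

lemma le_minEU (hC : C.Nonempty) {f : S → V} {c : ℝ} (h : ∀ p ∈ C, c ≤ EU u f p) :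
    c ≤ minEU u C f :=
  le_csInf (hC.image _) (by rintro _ ⟨q, hq, rfl⟩; exact h q hq)

lemma EU_le_maxEU (hCP : D ⊆ ProbCharges S) {f : S → V} (hf : IsAct X f)
    {p : MSet S → ℝ} (hp : p ∈ D) : EU u f p ≤ maxEU u D f :=
  le_csSup (bddAbove_EU hCP hf) ⟨p, hp, rfl⟩

lemma maxEU_le (hD : D.Nonempty) {f : S → V} {c : ℝ} (h : ∀ p ∈ D, EU u f p ≤ c) :
    maxEU u D f ≤ c :=
  csSup_le (hD.image _) (by rintro _ ⟨q, hq, rfl⟩; exact h q hq)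

lemma minEU_bounds (hC : C.Nonempty) (hCP : C ⊆ ProbCharges S) {f : S → V} (hf : IsAct X f)
    {lo hi : ℝ} (hlo : ∀ s, lo ≤ u (f s)) (hhi : ∀ s, u (f s) ≤ hi) :
    lo ≤ minEU u C f ∧ minEU u C f ≤ hi := by
  obtain ⟨q, hq⟩ := id hC
  exact ⟨le_minEU hC (fun p hp => (EU_bounds (hCP hp) hf hlo hhi).1),
    le_trans (minEU_le_EU hCP hf hq) (EU_bounds (hCP hq) hf hlo hhi).2⟩

lemma maxEU_bounds (hD : D.Nonempty) (hDP : D ⊆ ProbCharges S) {f : S → V} (hf : IsAct X f)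
    {lo hi : ℝ} (hlo : ∀ s, lo ≤ u (f s)) (hhi : ∀ s, u (f s) ≤ hi) :
    lo ≤ maxEU u D f ∧ maxEU u D f ≤ hi := by
  obtain ⟨q, hq⟩ := id hD
  exact ⟨le_trans (EU_bounds (hDP hq) hf hlo hhi).1 (EU_le_maxEU hDP hf hq),
    maxEU_le hD (fun p hp => (EU_bounds (hDP hp) hf hlo hhi).2)⟩

lemma minEU_le_maxEU (hCP : C ⊆ ProbCharges S) (hDP : D ⊆ ProbCharges S)
    (hCD : (C ∩ D).Nonempty) {f : S → V} (hf : IsAct X f) :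
    minEU u C f ≤ maxEU u D f := by
  obtain ⟨q, hqC, hqD⟩ := hCD
  exact le_trans (minEU_le_EU hCP hf hqC) (EU_le_maxEU hDP hf hqD)

lemma sInf_image_affine {P : Type*} {C : Set P} (hC : C.Nonempty) (F : P → ℝ)
    (hb : BddBelow (F '' C)) {t c : ℝ} (ht : 0 ≤ t) :
    sInf ((fun p => t * F p + c) '' C) = t * sInf (F '' C) + c := by
  obtain ⟨L, hL⟩ := hb
  have hbG : BddBelow ((fun p => t * F p + c) '' C) := by
    refine ⟨t * L + c, ?_⟩
    rintro _ ⟨q, hq, rfl⟩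
    exact add_le_add_left (mul_le_mul_of_nonneg_left (hL ⟨q, hq, rfl⟩) ht) c
  rcases eq_or_lt_of_le ht with rfl | ht'
  · have h1 : ((fun p => (0:ℝ) * F p + c) '' C) = (fun _ => c) '' C :=
      Set.image_congr (fun a _ => by ring)
    rw [h1, Set.Nonempty.image_const hC, csInf_singleton, zero_mul, zero_add]
  · refine le_antisymm ?_ ?_
    · by_contra hlt
      push_neg at hlt
      have h2 : sInf (F '' C) < (sInf ((fun p => t * F p + c) '' C) - c) / t := by
        rw [lt_div_iff₀ ht']; linarith
      obtain ⟨y, ⟨q, hq, rfl⟩, hy⟩ := exists_lt_of_csInf_lt (hC.image F) h2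
      have h3 : sInf ((fun p => t * F p + c) '' C) ≤ t * F q + c :=
        csInf_le hbG ⟨q, hq, rfl⟩
      rw [lt_div_iff₀ ht'] at hy
      nlinarith
    · refine le_csInf (hC.image _) ?_
      rintro _ ⟨q, hq, rfl⟩
      exact add_le_add_left
        (mul_le_mul_of_nonneg_left (csInf_le ⟨L, hL⟩ ⟨q, hq, rfl⟩) ht) c

lemma sSup_image_affine {P : Type*} {C : Set P} (hC : C.Nonempty) (F : P → ℝ)
    (hb : BddAbove (F '' C)) {t c : ℝ} (ht : 0 ≤ t) :
    sSup ((fun p => t * F p + c) '' C) = t * sSup (F '' C) + c := by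
  obtain ⟨L, hL⟩ := hb
  have hbG : BddAbove ((fun p => t * F p + c) '' C) := by
    refine ⟨t * L + c, ?_⟩
    rintro _ ⟨q, hq, rfl⟩
    exact add_le_add_left (mul_le_mul_of_nonneg_left (hL ⟨q, hq, rfl⟩) ht) c
  rcases eq_or_lt_of_le ht with rfl | ht'
  · have h1 : ((fun p => (0:ℝ) * F p + c) '' C) = (fun _ => c) '' C :=
      Set.image_congr (fun a _ => by ring)
    rw [h1, Set.Nonempty.image_const hC, csSup_singleton, zero_mul, zero_add]
  · refine le_antisymm ?_ ?_
    · refine csSup_le (hC.image _) ?_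
      rintro _ ⟨q, hq, rfl⟩
      exact add_le_add_left
        (mul_le_mul_of_nonneg_left (le_csSup ⟨L, hL⟩ ⟨q, hq, rfl⟩) ht) c
    · by_contra hlt
      push_neg at hlt
      have h2 : (sSup ((fun p => t * F p + c) '' C) - c) / t < sSup (F '' C) := by
        rw [div_lt_iff₀ ht']; linarith
      obtain ⟨y, ⟨q, hq, rfl⟩, hy⟩ := exists_lt_of_lt_csSup (hC.image F) h2
      have h3 : t * F q + c ≤ sSup ((fun p => t * F p + c) '' C) :=
        le_csSup hbG ⟨q, hq, rfl⟩
      rw [div_lt_iff₀ ht'] at hy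
      nlinarith

lemma minEU_const (hC : C.Nonempty) (hCP : C ⊆ ProbCharges S) (x : V) :
    minEU u C (constAct S x) = u x := by
  have h1 : EU u (constAct S x) '' C = (fun _ => u x) '' C :=
    Set.image_congr (fun q hq => EU_const (hCP hq) x)
  rw [minEU, h1, Set.Nonempty.image_const hC, csInf_singleton]

lemma maxEU_const (hD : D.Nonempty) (hDP : D ⊆ ProbCharges S) (x : V) :
    maxEU u D (constAct S x) = u x := by
  have h1 : EU u (constAct S x) '' D = (fun _ => u x) '' D :=
    Set.image_congr (fun q hq => EU_const (hDP hq) x)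
  rw [maxEU, h1, Set.Nonempty.image_const hD, csSup_singleton]

lemma minEU_mix_const (hC : C.Nonempty) (hCP : C ⊆ ProbCharges S) (hu : IsAffineOn u X)
    {f : S → V} (hf : IsAct X f) {x : V} (hx : x ∈ X) {t : ℝ} (ht0 : 0 ≤ t) (ht1 : t ≤ 1) :
    minEU u C (mixAct t f (constAct S x)) = t * minEU u C f + (1 - t) * u x := by
  have h1 : EU u (mixAct t f (constAct S x)) '' C
      = (fun p => t * EU u f p + (1 - t) * u x) '' C := by
    refine Set.image_congr (fun q hq => ?_)
    rw [EU_mix (hCP hq) hu hf (isAct_const hx) ht0 ht1, EU_const (hCP hq) x]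
  rw [minEU, h1, sInf_image_affine hC (EU u f) (bddBelow_EU hCP hf) ht0]; rfl

lemma maxEU_mix_const (hD : D.Nonempty) (hDP : D ⊆ ProbCharges S) (hu : IsAffineOn u X)
    {f : S → V} (hf : IsAct X f) {x : V} (hx : x ∈ X) {t : ℝ} (ht0 : 0 ≤ t) (ht1 : t ≤ 1) :
    maxEU u D (mixAct t f (constAct S x)) = t * maxEU u D f + (1 - t) * u x := by
  have h1 : EU u (mixAct t f (constAct S x)) '' D
      = (fun p => t * EU u f p + (1 - t) * u x) '' D := by
    refine Set.image_congr (fun q hq => ?_)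
    rw [EU_mix (hDP hq) hu hf (isAct_const hx) ht0 ht1, EU_const (hDP hq) x]
  rw [maxEU, h1, sSup_image_affine hD (EU u f) (bddAbove_EU hDP hf) ht0]; rfl

end MinMaxEU
section ContinuityHelpers

lemma abs_sub_le_sum' (a b : ℝ) : |a - b| ≤ |a| + |b| := by
  calc |a - b| = |a + -b| := by ring_nf
    _ ≤ |a| + |-b| := abs_add_le _ _
    _ = |a| + |b| := by rw [abs_neg]

lemma continuous_inf_affine {P : Type*} {C : Set P} (hC : C.Nonempty) (F G : P → ℝ) {K : ℝ}
    (hK : ∀ p ∈ C, |F p| ≤ K ∧ |G p| ≤ K) :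
    Continuous (fun t : ℝ => sInf ((fun p => t * F p + (1 - t) * G p) '' C)) := by
  have hK0 : 0 ≤ K := by
    obtain ⟨q, hq⟩ := hC; exact le_trans (abs_nonneg _) (hK q hq).1
  have hbdd : ∀ t : ℝ, BddBelow ((fun p => t * F p + (1 - t) * G p) '' C) := by
    intro t
    refine ⟨-((|t| + |1 - t|) * K), ?_⟩
    rintro _ ⟨q, hq, rfl⟩
    obtain ⟨h1, h2⟩ := hK q hq
    have e1 : |t * F q| ≤ |t| * K := by
      rw [abs_mul]; exact mul_le_mul_of_nonneg_left h1 (abs_nonneg t)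
    have e2 : |(1 - t) * G q| ≤ |1 - t| * K := by
      rw [abs_mul]; exact mul_le_mul_of_nonneg_left h2 (abs_nonneg _)
    have := neg_abs_le (t * F q)
    have := neg_abs_le ((1 - t) * G q)
    simp only []
    linarith
  have hlip : ∀ t t' : ℝ, sInf ((fun p => t * F p + (1 - t) * G p) '' C)
      ≤ sInf ((fun p => t' * F p + (1 - t') * G p) '' C) + 2 * K * |t - t'| := by
    intro t t'
    have step : ∀ q ∈ C, sInf ((fun p => t * F p + (1 - t) * G p) '' C) - 2 * K * |t - t'|
        ≤ t' * F q + (1 - t') * G q := by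
      intro q hq
      have hle : sInf ((fun p => t * F p + (1 - t) * G p) '' C) ≤ t * F q + (1 - t) * G q :=
        csInf_le (hbdd t) ⟨q, hq, rfl⟩
      have habs : |(t - t') * (F q - G q)| ≤ |t - t'| * (2 * K) := by
        rw [abs_mul]
        refine mul_le_mul_of_nonneg_left ?_ (abs_nonneg _)
        have := abs_sub_le_sum' (F q) (G q)
        have := (hK q hq).1; have := (hK q hq).2
        linarith
      have hd := le_of_abs_le habs
      have hcomm : |t - t'| * (2 * K) = 2 * K * |t - t'| := by ring
      nlinarith [hle, hd]
    have h2 : sInf ((fun p => t * F p + (1 - t) * G p) '' C) - 2 * K * |t - t'|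
        ≤ sInf ((fun p => t' * F p + (1 - t') * G p) '' C) :=
      le_csInf (hC.image _) (by rintro _ ⟨q, hq, rfl⟩; exact step q hq)
    linarith
  rw [Metric.continuous_iff]
  intro b ε hε
  refine ⟨ε / (2 * K + 1), by positivity, fun a hab => ?_⟩
  rw [Real.dist_eq] at hab ⊢
  have h1 := hlip a b
  have h2 := hlip b a
  rw [abs_sub_comm b a] at h2
  have hle : |sInf ((fun p => a * F p + (1 - a) * G p) '' C)
      - sInf ((fun p => b * F p + (1 - b) * G p) '' C)| ≤ 2 * K * |a - b| :=
    abs_sub_le_iff.mpr ⟨by linarith, by linarith⟩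
  have hfin : 2 * K * |a - b| < ε := by
    have h3 : 2 * K * |a - b| ≤ 2 * K * (ε / (2 * K + 1)) :=
      mul_le_mul_of_nonneg_left hab.le (by linarith)
    have h4 : 2 * K * (ε / (2 * K + 1)) < ε := by
      have hpos : (0:ℝ) < 2 * K + 1 := by linarith
      rw [mul_div_assoc', div_lt_iff₀ hpos]
      nlinarith
    linarith
  linarith [hle]

lemma continuous_sup_affine {P : Type*} {C : Set P} (hC : C.Nonempty) (F G : P → ℝ) {K : ℝ}
    (hK : ∀ p ∈ C, |F p| ≤ K ∧ |G p| ≤ K) :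
    Continuous (fun t : ℝ => sSup ((fun p => t * F p + (1 - t) * G p) '' C)) := by
  have hK0 : 0 ≤ K := by
    obtain ⟨q, hq⟩ := hC; exact le_trans (abs_nonneg _) (hK q hq).1
  have hbdd : ∀ t : ℝ, BddAbove ((fun p => t * F p + (1 - t) * G p) '' C) := by
    intro t
    refine ⟨(|t| + |1 - t|) * K, ?_⟩
    rintro _ ⟨q, hq, rfl⟩
    obtain ⟨h1, h2⟩ := hK q hq
    have e1 : |t * F q| ≤ |t| * K := by
      rw [abs_mul]; exact mul_le_mul_of_nonneg_left h1 (abs_nonneg t)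
    have e2 : |(1 - t) * G q| ≤ |1 - t| * K := by
      rw [abs_mul]; exact mul_le_mul_of_nonneg_left h2 (abs_nonneg _)
    have := le_abs_self (t * F q)
    have := le_abs_self ((1 - t) * G q)
    simp only []
    linarith
  have hlip : ∀ t t' : ℝ, sSup ((fun p => t * F p + (1 - t) * G p) '' C)
      ≤ sSup ((fun p => t' * F p + (1 - t') * G p) '' C) + 2 * K * |t - t'| := by
    intro t t'
    have step : ∀ q ∈ C, t * F q + (1 - t) * G q
        ≤ sSup ((fun p => t' * F p + (1 - t') * G p) '' C) + 2 * K * |t - t'| := by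
      intro q hq
      have hle : t' * F q + (1 - t') * G q
          ≤ sSup ((fun p => t' * F p + (1 - t') * G p) '' C) :=
        le_csSup (hbdd t') ⟨q, hq, rfl⟩
      have habs : |(t - t') * (F q - G q)| ≤ |t - t'| * (2 * K) := by
        rw [abs_mul]
        refine mul_le_mul_of_nonneg_left ?_ (abs_nonneg _)
        have := abs_sub_le_sum' (F q) (G q)
        have := (hK q hq).1; have := (hK q hq).2
        linarith
      have hd := le_of_abs_le habs
      nlinarith [hle, hd]
    exact csSup_le (hC.image _) (by rintro _ ⟨q, hq, rfl⟩; exact step q hq)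
  rw [Metric.continuous_iff]
  intro b ε hε
  refine ⟨ε / (2 * K + 1), by positivity, fun a hab => ?_⟩
  rw [Real.dist_eq] at hab ⊢
  have h1 := hlip a b
  have h2 := hlip b a
  rw [abs_sub_comm b a] at h2
  have hle : |sSup ((fun p => a * F p + (1 - a) * G p) '' C)
      - sSup ((fun p => b * F p + (1 - b) * G p) '' C)| ≤ 2 * K * |a - b| :=
    abs_sub_le_iff.mpr ⟨by linarith, by linarith⟩
  have hfin : 2 * K * |a - b| < ε := by
    have h3 : 2 * K * |a - b| ≤ 2 * K * (ε / (2 * K + 1)) :=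
      mul_le_mul_of_nonneg_left hab.le (by linarith)
    have h4 : 2 * K * (ε / (2 * K + 1)) < ε := by
      have hpos : (0:ℝ) < 2 * K + 1 := by linarith
      rw [mul_div_assoc', div_lt_iff₀ hpos]
      nlinarith
    linarith
  linarith [hle]

end ContinuityHelpers
section BackwardDir
variable {X : Set V} {u : V → ℝ} {C D : Set (MSet S → ℝ)} {R Rstar : (S → V) → (S → V) → Prop}

lemma alphaVal_const (hC : C.Nonempty) (hD : D.Nonempty) (hCP : C ⊆ ProbCharges S)
    (hDP : D ⊆ ProbCharges S) (α : ℝ) (x : V) : alphaVal u C D α (constAct S x) = u x := by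
  rw [alphaVal, minEU_const hC hCP, maxEU_const hD hDP]; ring

lemma alphaVal_mix_const (hC : C.Nonempty) (hD : D.Nonempty) (hCP : C ⊆ ProbCharges S)
    (hDP : D ⊆ ProbCharges S) (hu : IsAffineOn u X) {f : S → V} (hf : IsAct X f)
    {x : V} (hx : x ∈ X) {α t : ℝ} (ht0 : 0 ≤ t) (ht1 : t ≤ 1) :
    alphaVal u C D α (mixAct t f (constAct S x))
      = t * alphaVal u C D α f + (1 - t) * u x := by
  rw [alphaVal, minEU_mix_const hC hCP hu hf hx ht0 ht1,
    maxEU_mix_const hD hDP hu hf hx ht0 ht1, alphaVal]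
  ring

lemma finite_range_argmin (φ : S → ℝ) (hfin : (Set.range φ).Finite) :
    ∃ s₀ : S, ∀ s : S, φ s₀ ≤ φ s := by
  classical
  have hne : hfin.toFinset.Nonempty := by
    obtain ⟨s⟩ := ‹Nonempty S›; exact ⟨φ s, hfin.mem_toFinset.mpr ⟨s, rfl⟩⟩
  obtain ⟨s₀, hs₀⟩ := hfin.mem_toFinset.mp (hfin.toFinset.min'_mem hne)
  refine ⟨s₀, fun s => ?_⟩
  have h : φ s₀ = hfin.toFinset.min' hne := hs₀
  rw [h]; exact hfin.toFinset.min'_le _ (hfin.mem_toFinset.mpr ⟨s, rfl⟩)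

lemma backward (hX : Convex ℝ X) (hrep : IsHPRep X R u C D) {α : ℝ}
    (hα0 : 0 ≤ α) (hα1 : α ≤ 1)
    (hrs : ∀ f g, IsAct X f → IsAct X g →
      (Rstar f g ↔ alphaVal u C D α g < alphaVal u C D α f)) :
    InvBiseparable X Rstar ∧ ∀ f g, IsAct X f → IsAct X g → R f g → Rstar f g := by
  obtain ⟨hu, hnc, hCne, hDne, hCP, hDP, _, _, _, _, hCD, hR⟩ := hrep
  refine ⟨⟨?_, ?_, ?_, ?_, ?_⟩, ?_⟩
  · -- asymmetry
    intro f g hf hg h1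
    rw [hrs f g hf hg] at h1
    rw [hrs g f hg hf]
    exact not_lt.mpr h1.le
  · -- negative transitivity
    intro f g h hf hg hh h1 h2
    rw [hrs f g hf hg] at h1
    rw [hrs g h hg hh] at h2
    rw [hrs f h hf hh]
    exact not_lt.mpr (le_trans (not_lt.mp h1) (not_lt.mp h2))
  · -- Axiom 2 (continuity)
    intro f g h hf hg hh
    obtain ⟨sf1, sf2, hfl, hfh⟩ := act_argbounds hf u
    obtain ⟨sg1, sg2, hgl, hgh⟩ := act_argbounds hg u
    set K := |u (f sf1)| + |u (f sf2)| + |u (g sg1)| + |u (g sg2)| with hKdef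
    have hbnd : ∀ p, p ∈ ProbCharges S → |EU u f p| ≤ K ∧ |EU u g p| ≤ K := by
      intro q hq
      obtain ⟨a1, a2⟩ := EU_bounds (X := X) hq hf hfl hfh
      obtain ⟨b1, b2⟩ := EU_bounds (X := X) hq hg hgl hgh
      have n1 := neg_abs_le (u (f sf1)); have n2 := le_abs_self (u (f sf2))
      have n3 := neg_abs_le (u (g sg1)); have n4 := le_abs_self (u (g sg2))
      have m1 := abs_nonneg (u (f sf1)); have m2 := abs_nonneg (u (f sf2))
      have m3 := abs_nonneg (u (g sg1)); have m4 := abs_nonneg (u (g sg2))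
      constructor <;> rw [abs_le] <;> constructor <;> linarith
    have hKC : ∀ p ∈ C, |EU u f p| ≤ K ∧ |EU u g p| ≤ K := fun q hq => hbnd q (hCP hq)
    have hKD : ∀ p ∈ D, |EU u f p| ≤ K ∧ |EU u g p| ≤ K := fun q hq => hbnd q (hDP hq)
    set Φ : ℝ → ℝ := fun t =>
      α * sInf ((fun p => t * EU u f p + (1 - t) * EU u g p) '' C)
        + (1 - α) * sSup ((fun p => t * EU u f p + (1 - t) * EU u g p) '' D) with hΦdef
    have hcont : Continuous Φ :=
      (continuous_const.mul (continuous_inf_affine hCne _ _ hKC)).add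
        (continuous_const.mul (continuous_sup_affine hDne _ _ hKD))
    have hval : ∀ a : Set.Icc (0:ℝ) 1, alphaVal u C D α (mixAct (↑a) f g) = Φ ↑a := by
      intro a
      have h1 : EU u (mixAct (↑a) f g) '' C
          = (fun p => ↑a * EU u f p + (1 - ↑a) * EU u g p) '' C :=
        Set.image_congr (fun q hq => EU_mix (hCP hq) hu hf hg a.2.1 a.2.2)
      have h2 : EU u (mixAct (↑a) f g) '' D
          = (fun p => ↑a * EU u f p + (1 - ↑a) * EU u g p) '' D :=
        Set.image_congr (fun q hq => EU_mix (hDP hq) hu hf hg a.2.1 a.2.2)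
      rw [alphaVal, minEU, maxEU, h1, h2, hΦdef]
    constructor
    · have hset : {a : Set.Icc (0:ℝ) 1 | Rstar (mixAct (↑a) f g) h}
          = (fun a : Set.Icc (0:ℝ) 1 => Φ ↑a) ⁻¹' (Set.Ioi (alphaVal u C D α h)) := by
        ext a
        simp only [Set.mem_setOf_eq, Set.mem_preimage, Set.mem_Ioi]
        rw [hrs _ _ (isAct_mix hX hf hg a.2.1 a.2.2) hh, hval a]
      rw [hset]
      exact (hcont.comp continuous_subtype_val).isOpen_preimage _ isOpen_Ioi
    · have hset : {a : Set.Icc (0:ℝ) 1 | Rstar h (mixAct (↑a) f g)}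
          = (fun a : Set.Icc (0:ℝ) 1 => Φ ↑a) ⁻¹' (Set.Iio (alphaVal u C D α h)) := by
        ext a
        simp only [Set.mem_setOf_eq, Set.mem_preimage, Set.mem_Iio]
        rw [hrs _ _ hh (isAct_mix hX hf hg a.2.1 a.2.2), hval a]
      rw [hset]
      exact (hcont.comp continuous_subtype_val).isOpen_preimage _ isOpen_Iio
  · -- Axiom 3 (certainty independence)
    intro f g hf hg x hx t ht0 ht1
    rw [hrs f g hf hg,
      hrs _ _ (isAct_mix hX hf (isAct_const hx) ht0.le ht1.le)
        (isAct_mix hX hg (isAct_const hx) ht0.le ht1.le),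
      alphaVal_mix_const hCne hDne hCP hDP hu hf hx ht0.le ht1.le,
      alphaVal_mix_const hCne hDne hCP hDP hu hg hx ht0.le ht1.le]
    constructor <;> intro hlt <;> nlinarith [hlt, ht0]
  · -- Axiom 5 (monotonicity)
    intro f g hf hg hpt
    have hpt' : ∀ s, u (g s) < u (f s) := by
      intro s
      have h := (hrs _ _ (isAct_const (hf.1 s)) (isAct_const (hg.1 s))).mp (hpt s)
      rwa [alphaVal_const hCne hDne hCP hDP, alphaVal_const hCne hDne hCP hDP] at h
    have hfin : (Set.range fun s => u (f s) - u (g s)).Finite :=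
      ((simpleMeas_pair (isAct_simpleMeas hf) (isAct_simpleMeas hg)).1.image
        (fun ab => u ab.1 - u ab.2)).subset
        (by rintro _ ⟨s, rfl⟩; exact ⟨(f s, g s), ⟨s, rfl⟩, rfl⟩)
    obtain ⟨s₀, hs₀⟩ := finite_range_argmin _ hfin
    set ε := u (f s₀) - u (g s₀) with hεdef
    have hε : 0 < ε := by have := hpt' s₀; simp only [hεdef]; linarith
    have hεs : ∀ s, u (g s) + ε ≤ u (f s) := by
      intro s
      have h : u (f s₀) - u (g s₀) ≤ u (f s) - u (g s) := hs₀ s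
      simp only [hεdef]; linarith
    have hm : minEU u C g + ε ≤ minEU u C f := by
      refine le_minEU hCne (fun q hq => ?_)
      have h1 := EU_add_const_le (hCP hq) hf hg hεs
      have h2 := minEU_le_EU (u := u) hCP hg hq
      linarith
    have hM : maxEU u D g + ε ≤ maxEU u D f := by
      have h := maxEU_le (u := u) hDne (f := g) (c := maxEU u D f - ε) (fun q hq => ?_)
      · linarith
      · have h1 := EU_add_const_le (hDP hq) hf hg hεs
        have h2 := EU_le_maxEU (u := u) hDP hf hq
        linarith
    rw [hrs f g hf hg]
    show α * minEU u C g + (1 - α) * maxEU u D g < α * minEU u C f + (1 - α) * maxEU u D f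
    nlinarith [mul_le_mul_of_nonneg_left hm hα0,
      mul_le_mul_of_nonneg_left hM (by linarith : (0:ℝ) ≤ 1 - α), hε, hα0, hα1]
  · -- extension
    intro f g hf hg hfg
    rw [hR f g hf hg] at hfg
    obtain ⟨h1, h2⟩ := hfg
    rw [hrs f g hf hg]
    show α * minEU u C g + (1 - α) * maxEU u D g < α * minEU u C f + (1 - α) * maxEU u D f
    rcases lt_or_ge 0 α with hpos | hz
    · nlinarith [mul_lt_mul_of_pos_left h1 hpos,
        mul_le_mul_of_nonneg_left h2.le (by linarith : (0:ℝ) ≤ 1 - α)]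
    · have hz' : α = 0 := le_antisymm hz hα0
      rw [hz']; nlinarith [h2]

end BackwardDir
section ForwardBasics
variable {X : Set V} {u : V → ℝ} {Rstar : (S → V) → (S → V) → Prop}

lemma mixAct_one (f g : S → V) : mixAct 1 f g = f := by
  funext s; simp [mixAct]

lemma mixAct_zero (f g : S → V) : mixAct 0 f g = g := by
  funext s; simp [mixAct]

lemma mixAct_constAct (t : ℝ) (x z : V) :
    mixAct t (constAct S x) (constAct S z) = constAct S (t • x + (1 - t) • z) := rfl

lemma near_one (U : Set (Set.Icc (0:ℝ) 1)) (hU : IsOpen U)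
    (h1 : (⟨1, by norm_num⟩ : Set.Icc (0:ℝ) 1) ∈ U) :
    ∃ t : Set.Icc (0:ℝ) 1, (t:ℝ) < 1 ∧ 0 < (t:ℝ) ∧ t ∈ U := by
  rw [Metric.isOpen_iff] at hU
  obtain ⟨ε, hε, hball⟩ := hU _ h1
  set c : ℝ := max (1/2) (1 - ε/2) with hcdef
  have hchalf : (1/2 : ℝ) ≤ c := le_max_left _ _
  have hcnear : 1 - ε/2 ≤ c := le_max_right _ _
  have hc1 : c < 1 := max_lt (by norm_num) (by linarith)
  refine ⟨⟨c, by constructor <;> linarith⟩, hc1, by linarith, hball ?_⟩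
  rw [Metric.mem_ball, Subtype.dist_eq, Real.dist_eq]
  show |c - 1| < ε
  rw [abs_of_nonpos (by linarith)]
  linarith

lemma exists_u_eq (hX : Convex ℝ X) (hu : IsAffineOn u X) {a b : V} (ha : a ∈ X) (hb : b ∈ X)
    {r : ℝ} (h1 : u a ≤ r) (h2 : r ≤ u b) : ∃ x ∈ X, u x = r := by
  rcases eq_or_lt_of_le (h1.trans h2) with heq | hlt
  · exact ⟨a, ha, le_antisymm h1 (heq ▸ h2)⟩
  · set t := (r - u a) / (u b - u a) with htdef
    have hba : u b - u a ≠ 0 := by intro h; rw [sub_eq_zero] at h; rw [h] at hlt; exact lt_irrefl _ hlt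
    have ht0 : 0 ≤ t := div_nonneg (by linarith) (by linarith)
    have ht1 : t ≤ 1 := by rw [htdef, div_le_one (by linarith)]; linarith
    refine ⟨t • b + (1 - t) • a, hX hb ha ht0 (by linarith) (by ring), ?_⟩
    rw [hu b hb a ha t ht0 ht1]
    have h3 : t * (u b - u a) = r - u a := div_mul_cancel₀ _ hba
    rw [mul_sub] at h3
    ring_nf
    ring_nf at h3
    linarith

variable (hX : Convex ℝ X) (hu : IsAffineOn u X)
  (hnc2 : ∃ x₀ ∈ X, ∃ x₁ ∈ X, u x₀ < u x₁)
  (hasym : ∀ f g, IsAct X f → IsAct X g → Rstar f g → ¬ Rstar g f)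
  (hneg : ∀ f g h, IsAct X f → IsAct X g → IsAct X h → ¬ Rstar f g → ¬ Rstar g h → ¬ Rstar f h)
  (hax2 : PrefAx2 X Rstar) (hax3 : PrefAx3 X Rstar) (hax5 : PrefAx5 X Rstar)
  (hcu : ∀ a ∈ X, ∀ b ∈ X, u b < u a → Rstar (constAct S a) (constAct S b))

include hasym hneg in
lemma rstar_trans {f g h : S → V} (hf : IsAct X f) (hg : IsAct X g) (hh : IsAct X h)
    (h1 : Rstar f g) (h2 : Rstar g h) : Rstar f h := by
  by_contra hfh
  exact hneg f h g hf hh hg hfh (hasym g h hg hh h2) h1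

include hneg in
lemma rstar_or {f g h : S → V} (hf : IsAct X f) (hg : IsAct X g) (hh : IsAct X h)
    (h1 : Rstar f h) : Rstar f g ∨ Rstar g h := by
  by_contra hc
  push_neg at hc
  exact hneg f g h hf hg hh hc.1 hc.2 h1

include hX hu hnc2 hasym hax2 hax5 hcu in
lemma not_above {f : S → V} (hf : IsAct X f) {x : V} (hx : x ∈ X)
    (hb : ∀ s, u (f s) ≤ u x) : ¬ Rstar f (constAct S x) := by
  intro hR
  by_cases hz : ∃ z ∈ X, u x < u z
  · obtain ⟨z, hzX, hxz⟩ := hz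
    have hopen := (hax2 (constAct S x) (constAct S z) f (isAct_const hx) (isAct_const hzX) hf).2
    have h1 : (⟨1, by norm_num⟩ : Set.Icc (0:ℝ) 1)
        ∈ {a : Set.Icc (0:ℝ) 1 | Rstar f (mixAct (↑a) (constAct S x) (constAct S z))} := by
      show Rstar f (mixAct 1 (constAct S x) (constAct S z))
      rw [mixAct_one]; exact hR
    obtain ⟨t, ht1, ht0, htmem⟩ := near_one _ hopen h1
    set w := (t:ℝ) • x + (1 - (t:ℝ)) • z with hwdef
    have hwX : w ∈ X := hX hx hzX t.2.1 (by linarith [t.2.2]) (by ring)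
    have hw : u w = t * u x + (1 - t) * u z := hu x hx z hzX t t.2.1 t.2.2
    have hfw : ∀ s, u (f s) < u w := by
      intro s
      have := hb s
      nlinarith [hw, hxz, ht1]
    have hgt : Rstar (constAct S w) f :=
      hax5 (constAct S w) f (isAct_const hwX) hf
        (fun s => hcu w hwX (f s) (hf.1 s) (hfw s))
    exact hasym f (constAct S w) hf (isAct_const hwX) htmem hgt
  · push_neg at hz
    obtain ⟨x₀, hx₀, x₁, hx₁, hlt01⟩ := hnc2
    have hz0 : u x₀ < u x := lt_of_lt_of_le hlt01 (hz x₁ hx₁)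
    have hopen := (hax2 f (constAct S x₀) (constAct S x) hf (isAct_const hx₀) (isAct_const hx)).1
    have h1 : (⟨1, by norm_num⟩ : Set.Icc (0:ℝ) 1)
        ∈ {a : Set.Icc (0:ℝ) 1 | Rstar (mixAct (↑a) f (constAct S x₀)) (constAct S x)} := by
      show Rstar (mixAct 1 f (constAct S x₀)) (constAct S x)
      rw [mixAct_one]; exact hR
    obtain ⟨t, ht1, ht0, htmem⟩ := near_one _ hopen h1
    set g := mixAct (↑t) f (constAct S x₀) with hgdef
    have hgact : IsAct X g := isAct_mix hX hf (isAct_const hx₀) t.2.1 t.2.2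
    have hgu : ∀ s, u (g s) < u x := by
      intro s
      have h2 : u (g s) = t * u (f s) + (1 - t) * u x₀ :=
        hu (f s) (hf.1 s) x₀ hx₀ t t.2.1 t.2.2
      have := hb s
      nlinarith [h2, hz0, ht1, t.2.1]
    have hgt : Rstar (constAct S x) g :=
      hax5 (constAct S x) g (isAct_const hx) hgact
        (fun s => hcu x hx (g s) (hgact.1 s) (hgu s))
    exact hasym g (constAct S x) hgact (isAct_const hx) htmem hgt

include hX hu hnc2 hasym hax2 hax5 hcu in
lemma not_below {f : S → V} (hf : IsAct X f) {x : V} (hx : x ∈ X)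
    (hb : ∀ s, u x ≤ u (f s)) : ¬ Rstar (constAct S x) f := by
  intro hR
  by_cases hz : ∃ z ∈ X, u z < u x
  · obtain ⟨z, hzX, hxz⟩ := hz
    have hopen := (hax2 (constAct S x) (constAct S z) f (isAct_const hx) (isAct_const hzX) hf).1
    have h1 : (⟨1, by norm_num⟩ : Set.Icc (0:ℝ) 1)
        ∈ {a : Set.Icc (0:ℝ) 1 | Rstar (mixAct (↑a) (constAct S x) (constAct S z)) f} := by
      show Rstar (mixAct 1 (constAct S x) (constAct S z)) f
      rw [mixAct_one]; exact hR
    obtain ⟨t, ht1, ht0, htmem⟩ := near_one _ hopen h1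
    set w := (t:ℝ) • x + (1 - (t:ℝ)) • z with hwdef
    have hwX : w ∈ X := hX hx hzX t.2.1 (by linarith [t.2.2]) (by ring)
    have hw : u w = t * u x + (1 - t) * u z := hu x hx z hzX t t.2.1 t.2.2
    have hfw : ∀ s, u w < u (f s) := by
      intro s
      have := hb s
      nlinarith [hw, hxz, ht1]
    have hgt : Rstar f (constAct S w) :=
      hax5 f (constAct S w) hf (isAct_const hwX)
        (fun s => hcu (f s) (hf.1 s) w hwX (hfw s))
    exact hasym (constAct S w) f (isAct_const hwX) hf htmem hgt
  · push_neg at hz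
    obtain ⟨x₀, hx₀, x₁, hx₁, hlt01⟩ := hnc2
    have hz1 : u x < u x₁ := lt_of_le_of_lt (hz x₀ hx₀) hlt01
    have hopen := (hax2 f (constAct S x₁) (constAct S x) hf (isAct_const hx₁) (isAct_const hx)).2
    have h1 : (⟨1, by norm_num⟩ : Set.Icc (0:ℝ) 1)
        ∈ {a : Set.Icc (0:ℝ) 1 | Rstar (constAct S x) (mixAct (↑a) f (constAct S x₁))} := by
      show Rstar (constAct S x) (mixAct 1 f (constAct S x₁))
      rw [mixAct_one]; exact hR
    obtain ⟨t, ht1, ht0, htmem⟩ := near_one _ hopen h1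
    set g := mixAct (↑t) f (constAct S x₁) with hgdef
    have hgact : IsAct X g := isAct_mix hX hf (isAct_const hx₁) t.2.1 t.2.2
    have hgu : ∀ s, u x < u (g s) := by
      intro s
      have h2 : u (g s) = t * u (f s) + (1 - t) * u x₁ :=
        hu (f s) (hf.1 s) x₁ hx₁ t t.2.1 t.2.2
      have := hb s
      nlinarith [h2, hz1, ht1, t.2.1]
    have hgt : Rstar g (constAct S x) :=
      hax5 g (constAct S x) hgact (isAct_const hx)
        (fun s => hcu (g s) (hgact.1 s) x hx (hgu s))
    exact hasym (constAct S x) g (isAct_const hx) hgact htmem hgt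

end ForwardBasics
section ForwardCE
variable {X : Set V} {u : V → ℝ} {Rstar : (S → V) → (S → V) → Prop}
variable (hX : Convex ℝ X) (hu : IsAffineOn u X)
  (hnc2 : ∃ x₀ ∈ X, ∃ x₁ ∈ X, u x₀ < u x₁)
  (hasym : ∀ f g, IsAct X f → IsAct X g → Rstar f g → ¬ Rstar g f)
  (hneg : ∀ f g h, IsAct X f → IsAct X g → IsAct X h → ¬ Rstar f g → ¬ Rstar g h → ¬ Rstar f h)
  (hax2 : PrefAx2 X Rstar) (hax5 : PrefAx5 X Rstar)
  (hcu : ∀ a ∈ X, ∀ b ∈ X, u b < u a → Rstar (constAct S a) (constAct S b))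

include hX hu hnc2 hasym hneg hax2 hax5 hcu in
lemma sub_left {x y : V} (hx : x ∈ X) (hy : y ∈ X) (heq : u x = u y) {f : S → V}
    (hf : IsAct X f) (h : Rstar (constAct S y) f) : Rstar (constAct S x) f := by
  refine (rstar_or hneg (isAct_const hy) (isAct_const hx) hf h).resolve_left ?_
  exact not_above hX hu hnc2 hasym hax2 hax5 hcu (isAct_const hy) hx (fun _ => heq.ge)

include hX hu hnc2 hasym hneg hax2 hax5 hcu in
lemma sub_right {x y : V} (hx : x ∈ X) (hy : y ∈ X) (heq : u x = u y) {f : S → V}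
    (hf : IsAct X f) (h : Rstar f (constAct S y)) : Rstar f (constAct S x) := by
  refine (rstar_or hneg hf (isAct_const hx) (isAct_const hy) h).resolve_right ?_
  exact not_above hX hu hnc2 hasym hax2 hax5 hcu (isAct_const hx) hy (fun _ => heq.le)

include hX hu hnc2 hasym hneg hax2 hax5 hcu in
lemma exists_v {f : S → V} (hf : IsAct X f) :
    ∃ c : ℝ, (∃ a ∈ X, u a = c) ∧
      (∀ x ∈ X, c < u x → Rstar (constAct S x) f) ∧
      (∀ x ∈ X, u x < c → Rstar f (constAct S x)) ∧
      (∀ x ∈ X, u x = c → ¬ Rstar (constAct S x) f ∧ ¬ Rstar f (constAct S x)) := by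
  obtain ⟨s₁, s₂, hlo, hhi⟩ := act_argbounds hf u
  rcases eq_or_lt_of_le (hlo s₂) with hflat | hstrict
  · -- `u ∘ f` is constant
    have hall : ∀ s, u (f s) = u (f s₁) :=
      fun s => le_antisymm (hflat ▸ hhi s) (hlo s)
    refine ⟨u (f s₁), ⟨f s₁, hf.1 s₁, rfl⟩, ?_, ?_, ?_⟩
    · intro x hx hgt
      exact hax5 (constAct S x) f (isAct_const hx) hf
        (fun s => hcu x hx (f s) (hf.1 s) (by rw [hall s]; exact hgt))
    · intro x hx hltx
      exact hax5 f (constAct S x) hf (isAct_const hx)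
        (fun s => hcu (f s) (hf.1 s) x hx (by rw [hall s]; exact hltx))
    · intro x hx heq
      constructor
      · exact not_below hX hu hnc2 hasym hax2 hax5 hcu hf hx
          (fun s => by rw [hall s]; exact heq.le)
      · exact not_above hX hu hnc2 hasym hax2 hax5 hcu hf hx
          (fun s => by rw [hall s]; exact heq.ge)
  · -- general case
    set xm := f s₁ with hxmdef
    set xM := f s₂ with hxMdef
    have hxmX : xm ∈ X := hf.1 s₁
    have hxMX : xM ∈ X := hf.1 s₂
    set w : ℝ → V := fun r => r • xM + (1 - r) • xm with hwdef
    have hwX : ∀ r : ℝ, 0 ≤ r → r ≤ 1 → w r ∈ X :=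
      fun r h0 h1 => hX hxMX hxmX h0 (by linarith) (by ring)
    have hwu : ∀ r : ℝ, 0 ≤ r → r ≤ 1 → u (w r) = r * u xM + (1 - r) * u xm :=
      fun r h0 h1 => hu xM hxMX xm hxmX r h0 h1
    set Tp := {a : Set.Icc (0:ℝ) 1 | Rstar (mixAct (↑a) (constAct S xM) (constAct S xm)) f}
      with hTpdef
    set Tm := {a : Set.Icc (0:ℝ) 1 | Rstar f (mixAct (↑a) (constAct S xM) (constAct S xm))}
      with hTmdef
    have hTpo : IsOpen Tp :=
      (hax2 (constAct S xM) (constAct S xm) f (isAct_const hxMX) (isAct_const hxmX) hf).1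
    have hTmo : IsOpen Tm :=
      (hax2 (constAct S xM) (constAct S xm) f (isAct_const hxMX) (isAct_const hxmX) hf).2
    have hconstm : ∀ a : Set.Icc (0:ℝ) 1,
        mixAct (↑a) (constAct S xM) (constAct S xm) = constAct S (w ↑a) := fun a => rfl
    have hnot1 : (⟨1, by norm_num⟩ : Set.Icc (0:ℝ) 1) ∉ Tm := by
      intro h
      have h' : Rstar f (constAct S xM) := by
        have := h
        simp only [hTmdef, Set.mem_setOf_eq] at this
        rwa [mixAct_one] at this
      exact not_above hX hu hnc2 hasym hax2 hax5 hcu hf hxMX hhi h'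
    have hnot0 : (⟨0, by norm_num⟩ : Set.Icc (0:ℝ) 1) ∉ Tp := by
      intro h
      have h' : Rstar (constAct S xm) f := by
        have := h
        simp only [hTpdef, Set.mem_setOf_eq] at this
        rwa [mixAct_zero] at this
      exact not_below hX hu hnc2 hasym hax2 hax5 hcu hf hxmX hlo h'
    have hdisj : ∀ a : Set.Icc (0:ℝ) 1, a ∈ Tp → a ∈ Tm → False := by
      intro a hp hm
      simp only [hTpdef, hTmdef, Set.mem_setOf_eq, hconstm a] at hp hm
      exact hasym _ f (isAct_const (hwX _ a.2.1 a.2.2)) hf hp hm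
    have hcover : ¬ ∀ a : Set.Icc (0:ℝ) 1, a ∈ Tp ∨ a ∈ Tm := by
      intro hcov
      have hcompl : Tm = Tpᶜ :=
        Set.ext fun a => ⟨fun h hp => hdisj a hp h, fun h => (hcov a).resolve_left h⟩
      have : PreconnectedSpace (Set.Icc (0:ℝ) 1) :=
        Subtype.preconnectedSpace isPreconnected_Icc
      have hclopen : IsClopen Tp := by
        refine ⟨?_, hTpo⟩
        rw [← isOpen_compl_iff, ← hcompl]
        exact hTmo
      rcases isClopen_iff.mp hclopen with hemp | huniv
      · have : (⟨1, by norm_num⟩ : Set.Icc (0:ℝ) 1) ∈ Tp :=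
          (hcov _).resolve_right hnot1
        rw [hemp] at this
        exact this
      · exact hnot0 (huniv ▸ Set.mem_univ _)
    push_neg at hcover
    obtain ⟨b₀, hnp, hnm⟩ := hcover
    simp only [hTpdef, hTmdef, Set.mem_setOf_eq, hconstm b₀] at hnp hnm
    set c := (b₀:ℝ) * u xM + (1 - (b₀:ℝ)) * u xm with hcdef
    have hwb₀X : w ↑b₀ ∈ X := hwX _ b₀.2.1 b₀.2.2
    have hwb₀u : u (w ↑b₀) = c := hwu _ b₀.2.1 b₀.2.2
    have hbm : u xm ≤ c := by nlinarith [b₀.2.1, b₀.2.2, hstrict]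
    have hbM : c ≤ u xM := by nlinarith [b₀.2.1, b₀.2.2, hstrict]
    refine ⟨c, ⟨w ↑b₀, hwb₀X, hwb₀u⟩, ?_, ?_, ?_⟩
    · -- u x > c implies x ≻* f
      intro x hx hgt
      by_cases hcase : u xM < u x
      · exact hax5 (constAct S x) f (isAct_const hx) hf
          (fun s => hcu x hx (f s) (hf.1 s) (lt_of_le_of_lt (hhi s) hcase))
      · push_neg at hcase
        set t := (u x - u xm) / (u xM - u xm) with htdef
        have hdne : u xM - u xm ≠ 0 := by intro h; nlinarith [hstrict]
        have ht0 : 0 ≤ t := div_nonneg (by linarith) (by linarith [hstrict])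
        have ht1 : t ≤ 1 := by rw [htdef, div_le_one (by linarith [hstrict])]; linarith
        have hub : u (w t) = u x := by
          rw [hwu t ht0 ht1]
          have h3 : t * (u xM - u xm) = u x - u xm := div_mul_cancel₀ _ hdne
          rw [mul_sub] at h3
          ring_nf; ring_nf at h3; linarith
        have hwtX : w t ∈ X := hwX t ht0 ht1
        -- w t strictly better than w b₀
        have hup : Rstar (constAct S (w t)) (constAct S (w ↑b₀)) :=
          hcu _ hwtX _ hwb₀X (by rw [hub, hwb₀u]; exact hgt)
        -- w t beats f
        have hp2 : Rstar (constAct S (w t)) f := by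
          rcases rstar_or hneg (isAct_const hwtX) hf (isAct_const hwb₀X) hup with h1 | h2
          · exact h1
          · exact absurd h2 hnm
        exact sub_left hX hu hnc2 hasym hneg hax2 hax5 hcu hx hwtX (by rw [hub]) hf hp2
    · -- u x < c implies f ≻* x
      intro x hx hltc
      by_cases hcase : u x < u xm
      · exact hax5 f (constAct S x) hf (isAct_const hx)
          (fun s => hcu (f s) (hf.1 s) x hx (lt_of_lt_of_le hcase (hlo s)))
      · push_neg at hcase
        set t := (u x - u xm) / (u xM - u xm) with htdef
        have hdne : u xM - u xm ≠ 0 := by intro h; nlinarith [hstrict]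
        have ht0 : 0 ≤ t := div_nonneg (by linarith) (by linarith [hstrict])
        have ht1 : t ≤ 1 := by
          rw [htdef, div_le_one (by linarith [hstrict])]; linarith [hbM]
        have hub : u (w t) = u x := by
          rw [hwu t ht0 ht1]
          have h3 : t * (u xM - u xm) = u x - u xm := div_mul_cancel₀ _ hdne
          rw [mul_sub] at h3
          ring_nf; ring_nf at h3; linarith
        have hwtX : w t ∈ X := hwX t ht0 ht1
        have hdown : Rstar (constAct S (w ↑b₀)) (constAct S (w t)) :=
          hcu _ hwb₀X _ hwtX (by rw [hub, hwb₀u]; exact hltc)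
        have hm2 : Rstar f (constAct S (w t)) := by
          rcases rstar_or hneg (isAct_const hwb₀X) hf (isAct_const hwtX) hdown with h1 | h2
          · exact absurd h1 hnp
          · exact h2
        exact sub_right hX hu hnc2 hasym hneg hax2 hax5 hcu hx hwtX (by rw [hub]) hf hm2
    · -- u x = c implies incomparability
      intro x hx heq
      constructor
      · intro h
        exact hnp (sub_left hX hu hnc2 hasym hneg hax2 hax5 hcu hwb₀X hx
          (by rw [hwb₀u, heq]) hf h)
      · intro h
        exact hnm (sub_right hX hu hnc2 hasym hneg hax2 hax5 hcu hwb₀X hx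
          (by rw [hwb₀u, heq]) hf h)

end ForwardCE
section ForwardChar
variable {X : Set V} {u : V → ℝ} {Rstar : (S → V) → (S → V) → Prop}
variable (hX : Convex ℝ X) (hu : IsAffineOn u X)
  (hnc2 : ∃ x₀ ∈ X, ∃ x₁ ∈ X, u x₀ < u x₁)
  (hasym : ∀ f g, IsAct X f → IsAct X g → Rstar f g → ¬ Rstar g f)
  (hneg : ∀ f g h, IsAct X f → IsAct X g → IsAct X h → ¬ Rstar f g → ¬ Rstar g h → ¬ Rstar f h)
  (hax2 : PrefAx2 X Rstar) (hax3 : PrefAx3 X Rstar) (hax5 : PrefAx5 X Rstar)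
  (hcu : ∀ a ∈ X, ∀ b ∈ X, u b < u a → Rstar (constAct S a) (constAct S b))
  {v : (S → V) → ℝ}
  (hv : ∀ f, IsAct X f → (∃ a ∈ X, u a = v f) ∧
      (∀ x ∈ X, v f < u x → Rstar (constAct S x) f) ∧
      (∀ x ∈ X, u x < v f → Rstar f (constAct S x)) ∧
      (∀ x ∈ X, u x = v f → ¬ Rstar (constAct S x) f ∧ ¬ Rstar f (constAct S x)))

include hX hu hnc2 hasym hax2 hax5 hcu hv in
lemma v_state_bounds {f : S → V} (hf : IsAct X f) :
    (∃ s, u (f s) ≤ v f) ∧ (∃ s, v f ≤ u (f s)) := by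
  obtain ⟨s₁, s₂, hlo, hhi⟩ := act_argbounds hf u
  constructor
  · by_contra h
    push_neg at h
    exact not_below hX hu hnc2 hasym hax2 hax5 hcu hf (hf.1 s₁) hlo
      ((hv f hf).2.1 (f s₁) (hf.1 s₁) (h s₁))
  · by_contra h
    push_neg at h
    exact not_above hX hu hnc2 hasym hax2 hax5 hcu hf (hf.1 s₂) hhi
      ((hv f hf).2.2.1 (f s₂) (hf.1 s₂) (h s₂))

include hX hu hasym hneg hv in
lemma char_lt {f g : S → V} (hf : IsAct X f) (hg : IsAct X g) (h : v g < v f) :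
    Rstar f g := by
  obtain ⟨af, hafX, hafu⟩ := (hv f hf).1
  obtain ⟨ag, hagX, hagu⟩ := (hv g hg).1
  obtain ⟨x, hxX, hxu⟩ := exists_u_eq hX hu hagX hafX
    (r := (v f + v g) / 2) (by rw [hagu]; linarith) (by rw [hafu]; linarith)
  have h1 : Rstar f (constAct S x) := (hv f hf).2.2.1 x hxX (by rw [hxu]; linarith)
  have h2 : Rstar (constAct S x) g := (hv g hg).2.1 x hxX (by rw [hxu]; linarith)
  exact rstar_trans hasym hneg hf (isAct_const hxX) hg h1 h2

include hX hu hnc2 hasym hneg hax2 hax3 hax5 hcu hv in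
lemma char_iff {f g : S → V} (hf : IsAct X f) (hg : IsAct X g) :
    Rstar f g ↔ v g < v f := by
  constructor
  · intro h
    by_contra hle
    push_neg at hle
    rcases eq_or_lt_of_le hle with heq | hlt
    · obtain ⟨af, hafX, hafu⟩ := (hv f hf).1
      rcases rstar_or hneg hf (isAct_const hafX) hg h with h1 | h2
      · exact ((hv f hf).2.2.2 af hafX hafu).2 h1
      · exact ((hv g hg).2.2.2 af hafX (by rw [hafu, heq])).1 h2
    · exact hasym g f hg hf (char_lt hX hu hasym hneg hv hg hf hlt) h
  · exact char_lt hX hu hasym hneg hv hf hg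

include hX hu hnc2 hasym hneg hax2 hax3 hax5 hcu hv in
lemma v_mix {f : S → V} (hf : IsAct X f) {x : V} (hx : x ∈ X) {t : ℝ}
    (ht0 : 0 < t) (ht1 : t < 1) :
    v (mixAct t f (constAct S x)) = t * v f + (1 - t) * u x := by
  set g := mixAct t f (constAct S x) with hgdef
  have hgact : IsAct X g := isAct_mix hX hf (isAct_const hx) ht0.le ht1.le
  set w := v g with hwdef
  set q := t * v f + (1 - t) * u x with hqdef
  have hgu : ∀ s, u (g s) = t * u (f s) + (1 - t) * u x :=
    fun s => hu (f s) (hf.1 s) x hx t ht0.le ht1.le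
  rcases lt_trichotomy w q with hlt | heq | hgt
  · exfalso
    obtain ⟨y, hyX, hyu⟩ := (hv f hf).1
    set z' := t • y + (1 - t) • x with hz'def
    have hz'X : z' ∈ X := hX hyX hx ht0.le (by linarith) (by ring)
    have hz'u : u z' = q := by
      rw [hz'def, hu y hyX x hx t ht0.le ht1.le, hyu]
    have hzg : Rstar (constAct S z') g :=
      (hv g hgact).2.1 z' hz'X (by rw [hz'u]; exact hlt)
    have hyf : Rstar (constAct S y) f :=
      (hax3 (constAct S y) f (isAct_const hyX) hf x hx t ht0 ht1).mpr hzg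
    exact ((hv f hf).2.2.2 y hyX hyu).1 hyf
  · exact heq
  · exfalso
    set r := (w - (1 - t) * u x) / t with hrdef
    have htr : t * r = w - (1 - t) * u x := mul_div_cancel₀ _ (ne_of_gt ht0)
    have hvfr : v f < r := by nlinarith [htr, hgt]
    obtain ⟨⟨sa, hsa⟩, ⟨sb, hsb⟩⟩ :=
      v_state_bounds hX hu hnc2 hasym hax2 hax5 hcu hv hgact
    have hsa' : u (f sa) ≤ r := by
      have := hgu sa
      nlinarith [hsa, htr]
    have hsb' : r ≤ u (f sb) := by
      have := hgu sb
      nlinarith [hsb, htr]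
    obtain ⟨x', hx'X, hx'u⟩ := exists_u_eq hX hu (hf.1 sa) (hf.1 sb) hsa' hsb'
    set z'' := t • x' + (1 - t) • x with hz''def
    have hz''X : z'' ∈ X := hX hx'X hx ht0.le (by linarith) (by ring)
    have hz''u : u z'' = w := by
      rw [hz''def, hu x' hx'X x hx t ht0.le ht1.le, hx'u]
      linarith [htr]
    have hincomp := (hv g hgact).2.2.2 z'' hz''X hz''u
    have hfx' : Rstar (constAct S x') f :=
      (hv f hf).2.1 x' hx'X (by rw [hx'u]; exact hvfr)
    have : Rstar (constAct S z'') g :=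
      (hax3 (constAct S x') f (isAct_const hx'X) hf x hx t ht0 ht1).mp hfx'
    exact hincomp.1 this

end ForwardChar
section ForwardMono
variable {X : Set V} {u : V → ℝ} {R Rstar : (S → V) → (S → V) → Prop} {C D : Set (MSet S → ℝ)}
variable (hX : Convex ℝ X) (hu : IsAffineOn u X)
  (hnc2 : ∃ x₀ ∈ X, ∃ x₁ ∈ X, u x₀ < u x₁)
  (hasym : ∀ f g, IsAct X f → IsAct X g → Rstar f g → ¬ Rstar g f)
  (hneg : ∀ f g h, IsAct X f → IsAct X g → IsAct X h → ¬ Rstar f g → ¬ Rstar g h → ¬ Rstar f h)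
  (hax2 : PrefAx2 X Rstar) (hax3 : PrefAx3 X Rstar) (hax5 : PrefAx5 X Rstar)
  (hcu : ∀ a ∈ X, ∀ b ∈ X, u b < u a → Rstar (constAct S a) (constAct S b))
  {v : (S → V) → ℝ}
  (hv : ∀ f, IsAct X f → (∃ a ∈ X, u a = v f) ∧
      (∀ x ∈ X, v f < u x → Rstar (constAct S x) f) ∧
      (∀ x ∈ X, u x < v f → Rstar f (constAct S x)) ∧
      (∀ x ∈ X, u x = v f → ¬ Rstar (constAct S x) f ∧ ¬ Rstar f (constAct S x)))
  (hCne : C.Nonempty) (hDne : D.Nonempty)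
  (hCP : C ⊆ ProbCharges S) (hDP : D ⊆ ProbCharges S) (hCD : (C ∩ D).Nonempty)
  (hR : ∀ f g, IsAct X f → IsAct X g →
    (R f g ↔ minEU u C g < minEU u C f ∧ maxEU u D g < maxEU u D f))
  (hext : ∀ f g, IsAct X f → IsAct X g → R f g → Rstar f g)

include hX hu hasym hv hCne hDne hCP hDP hCD hR hext in
lemma v_sandwich {f : S → V} (hf : IsAct X f) :
    minEU u C f ≤ v f ∧ v f ≤ maxEU u D f := by
  obtain ⟨s₁, s₂, hlo, hhi⟩ := act_argbounds hf u
  have hmb := minEU_bounds hCne hCP hf hlo hhi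
  have hMb := maxEU_bounds hDne hDP hf hlo hhi
  have hmM := minEU_le_maxEU (u := u) hCP hDP hCD hf
  obtain ⟨a, haX, hau⟩ := (hv f hf).1
  constructor
  · by_contra hc
    push_neg at hc
    obtain ⟨x, hxX, hxu⟩ := exists_u_eq hX hu haX (hf.1 s₂)
      (r := (v f + minEU u C f) / 2) (by rw [hau]; linarith) (by linarith [hmb.2])
    have h1 : Rstar (constAct S x) f := (hv f hf).2.1 x hxX (by rw [hxu]; linarith)
    have h2 : R f (constAct S x) := by
      rw [hR f _ hf (isAct_const hxX), minEU_const hCne hCP, maxEU_const hDne hDP]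
      exact ⟨by rw [hxu]; linarith, by rw [hxu]; linarith⟩
    exact hasym _ _ (isAct_const hxX) hf h1 (hext f _ hf (isAct_const hxX) h2)
  · by_contra hc
    push_neg at hc
    obtain ⟨x, hxX, hxu⟩ := exists_u_eq hX hu (hf.1 s₁) haX
      (r := (maxEU u D f + v f) / 2) (by linarith [hMb.1]) (by rw [hau]; linarith)
    have h1 : Rstar f (constAct S x) := (hv f hf).2.2.1 x hxX (by rw [hxu]; linarith)
    have h2 : R (constAct S x) f := by
      rw [hR _ f (isAct_const hxX) hf, minEU_const hCne hCP, maxEU_const hDne hDP]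
      exact ⟨by rw [hxu]; linarith, by rw [hxu]; linarith⟩
    exact hasym f _ hf (isAct_const hxX) h1 (hext _ f (isAct_const hxX) hf h2)

include hX hu hnc2 hasym hneg hax2 hax3 hax5 hcu hv hCne hDne hCP hDP hCD hR hext in
lemma v_mono {f g : S → V} (hf : IsAct X f) (hg : IsAct X g)
    (hm : minEU u C f ≤ minEU u C g) (hM : maxEU u D f ≤ maxEU u D g) : v f ≤ v g := by
  obtain ⟨x₀, hx₀X, x₁, hx₁X, hx01⟩ := id hnc2
  by_contra hc
  push_neg at hc
  set d := v f - v g with hddef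
  set e := u x₁ - u x₀ with hedef
  have hd : 0 < d := by rw [hddef]; linarith
  have he : 0 < e := by rw [hedef]; linarith
  set t := (e + d/2) / (e + d) with htdef
  have hedpos : 0 < e + d := by linarith
  have ht0 : 0 < t := div_pos (by linarith) hedpos
  have ht1 : t < 1 := by rw [htdef, div_lt_one hedpos]; linarith
  have hF' : IsAct X (mixAct t f (constAct S x₀)) :=
    isAct_mix hX hf (isAct_const hx₀X) ht0.le ht1.le
  have hG' : IsAct X (mixAct t g (constAct S x₁)) :=
    isAct_mix hX hg (isAct_const hx₁X) ht0.le ht1.le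
  have hmF := minEU_mix_const hCne hCP hu hf hx₀X ht0.le ht1.le
  have hmG := minEU_mix_const hCne hCP hu hg hx₁X ht0.le ht1.le
  have hMF := maxEU_mix_const hDne hDP hu hf hx₀X ht0.le ht1.le
  have hMG := maxEU_mix_const hDne hDP hu hg hx₁X ht0.le ht1.le
  have hRgf : R (mixAct t g (constAct S x₁)) (mixAct t f (constAct S x₀)) := by
    rw [hR _ _ hG' hF', hmF, hmG, hMF, hMG]
    constructor
    · nlinarith [hm, ht0, ht1, hx01]
    · nlinarith [hM, ht0, ht1, hx01]
  have hstar := hext _ _ hG' hF' hRgf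
  rw [char_iff hX hu hnc2 hasym hneg hax2 hax3 hax5 hcu hv hG' hF'] at hstar
  rw [v_mix hX hu hnc2 hasym hneg hax2 hax3 hax5 hcu hv hf hx₀X ht0 ht1,
    v_mix hX hu hnc2 hasym hneg hax2 hax3 hax5 hcu hv hg hx₁X ht0 ht1] at hstar
  have hkey : t * d - (1 - t) * e = d / 2 := by
    rw [htdef]; field_simp; ring
  have hexp1 : t * d = t * v f - t * v g := by rw [hddef]; ring
  have hexp2 : (1 - t) * e = (1 - t) * u x₁ - (1 - t) * u x₀ := by rw [hedef]; ring
  nlinarith [hstar, hkey, hexp1, hexp2, hd]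

end ForwardMono
lemma forward {X : Set V} {u : V → ℝ} {R Rstar : (S → V) → (S → V) → Prop}
    {C D : Set (MSet S → ℝ)} (hX : Convex ℝ X) (hrep : IsHPRep X R u C D)
    (hIB : InvBiseparable X Rstar)
    (hext : ∀ f g, IsAct X f → IsAct X g → R f g → Rstar f g) :
    ∃ α ∈ Set.Icc (0:ℝ) 1, ∀ f g, IsAct X f → IsAct X g →
      (Rstar f g ↔ alphaVal u C D α g < alphaVal u C D α f) := by
  obtain ⟨hu, hnc, hCne, hDne, hCP, hDP, hCcp, hDcp, hCcv, hDcv, hCD, hR⟩ := hrep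
  obtain ⟨hasym, hneg, hax2, hax3, hax5⟩ := hIB
  have hnc2 : ∃ x₀ ∈ X, ∃ x₁ ∈ X, u x₀ < u x₁ := by
    obtain ⟨x, hxX, y, hyX, hxy⟩ := hnc
    rcases lt_or_gt_of_ne hxy with h | h
    · exact ⟨x, hxX, y, hyX, h⟩
    · exact ⟨y, hyX, x, hxX, h⟩
  have hcu : ∀ a ∈ X, ∀ b ∈ X, u b < u a → Rstar (constAct S a) (constAct S b) := by
    intro a ha b hb hlt
    refine hext _ _ (isAct_const ha) (isAct_const hb) ?_
    rw [hR _ _ (isAct_const ha) (isAct_const hb), minEU_const hCne hCP,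
      minEU_const hCne hCP, maxEU_const hDne hDP, maxEU_const hDne hDP]
    exact ⟨hlt, hlt⟩
  have hvex : ∀ f, IsAct X f → ∃ c : ℝ, (∃ a ∈ X, u a = c) ∧
      (∀ x ∈ X, c < u x → Rstar (constAct S x) f) ∧
      (∀ x ∈ X, u x < c → Rstar f (constAct S x)) ∧
      (∀ x ∈ X, u x = c → ¬ Rstar (constAct S x) f ∧ ¬ Rstar f (constAct S x)) :=
    fun f hf => exists_v hX hu hnc2 hasym hneg hax2 hax5 hcu hf
  choose! v hv using hvex
  have hchar : ∀ {f g}, IsAct X f → IsAct X g → (Rstar f g ↔ v g < v f) :=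
    fun {f g} hf hg => char_iff hX hu hnc2 hasym hneg hax2 hax3 hax5 hcu hv hf hg
  have hsand : ∀ f, IsAct X f → minEU u C f ≤ v f ∧ v f ≤ maxEU u D f :=
    fun f hf => v_sandwich hX hu hasym hv hCne hDne hCP hDP hCD hR hext hf
  have hmono : ∀ {f g}, IsAct X f → IsAct X g → minEU u C f ≤ minEU u C g →
      maxEU u D f ≤ maxEU u D g → v f ≤ v g :=
    fun {f g} hf hg hm hM => v_mono hX hu hnc2 hasym hneg hax2 hax3 hax5 hcu hv
      hCne hDne hCP hDP hCD hR hext hf hg hm hM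
  by_cases hinc : ∃ h, IsAct X h ∧ minEU u C h < maxEU u D h
  · obtain ⟨h₀, hh₀, hlt₀⟩ := hinc
    have hsh := hsand h₀ hh₀
    set mh := minEU u C h₀ with hmhdef
    set Mh := maxEU u D h₀ with hMhdef
    set vh := v h₀ with hvhdef
    set α := (Mh - vh) / (Mh - mh) with hαdef
    have hα0 : 0 ≤ α := div_nonneg (by linarith [hsh.2]) (by linarith)
    have hα1 : α ≤ 1 := by rw [hαdef, div_le_one (by linarith)]; linarith [hsh.1]
    have hαid : α * (Mh - mh) = Mh - vh := div_mul_cancel₀ _ (sub_ne_zero.mpr hlt₀.ne')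
    have hval : ∀ f, IsAct X f → v f = α * minEU u C f + (1 - α) * maxEU u D f := by
      intro f hf
      rcases eq_or_lt_of_le (minEU_le_maxEU (u := u) hCP hDP hCD hf) with heq | hltf
      · have h1 := hsand f hf
        have hvf : v f = minEU u C f := le_antisymm (heq ▸ h1.2) h1.1
        rw [hvf, ← heq]; ring
      · set mf := minEU u C f with hmfdef
        set Mf := maxEU u D f with hMfdef
        obtain ⟨x₀, hx₀X, x₁, hx₁X, hx01⟩ := id hnc2
        set c₀ := (u x₀ + u x₁) / 2 with hc₀def
        set ε := (u x₁ - u x₀) / 2 with hεdef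
        have hεpos : 0 < ε := by rw [hεdef]; linarith
        set κ := (Mf - mf) / (Mh - mh) with hκdef
        have hκpos : 0 < κ := div_pos (by linarith) (by linarith)
        have hκid : κ * (Mh - mh) = Mf - mf := div_mul_cancel₀ _ (sub_ne_zero.mpr hlt₀.ne')
        set B := |mh - c₀| * κ + |mf - c₀| with hBdef
        have hB0 : 0 ≤ B := by positivity
        set t := min (min 1 (1/κ) / 2) (ε / (B + ε)) with htdef
        have hmin0 : (0:ℝ) < min 1 (1/κ) / 2 := by
          have : (0:ℝ) < min 1 (1/κ) := lt_min one_pos (by positivity)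
          linarith
        have ht0 : 0 < t := lt_min hmin0 (by positivity)
        have htle : t ≤ min 1 (1/κ) / 2 := min_le_left _ _
        have ht1 : t < 1 := by
          have h2 : min 1 (1/κ) ≤ 1 := min_le_left _ _
          have := lt_of_le_of_lt htle (by linarith : min 1 (1/κ) / 2 < 1)
          exact this
        have htB : t ≤ ε / (B + ε) := min_le_right _ _
        have htBε : t * B ≤ (1 - t) * ε := by
          have h2 : t * (B + ε) ≤ ε := (le_div_iff₀ (by positivity)).mp htB
          nlinarith
        set s := κ * t with hsdef
        have hs0 : 0 < s := mul_pos hκpos ht0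
        have hs1 : s < 1 := by
          have h2 : t ≤ (1/κ) / 2 := le_trans htle (by
            have := min_le_right 1 (1/κ); linarith)
          have h3 : κ * t ≤ κ * ((1/κ) / 2) := mul_le_mul_of_nonneg_left h2 hκpos.le
          have h4 : κ * ((1/κ) / 2) = 1/2 := by field_simp
          rw [hsdef]; linarith
        obtain ⟨b, hbX, hbu⟩ := exists_u_eq hX hu hx₀X hx₁X (r := c₀)
          (by rw [hc₀def]; linarith) (by rw [hc₀def]; linarith)
        set Aval := (s * mh + (1 - s) * c₀ - t * mf) / (1 - t) with hAdef
        have h1t : (0:ℝ) < 1 - t := by linarith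
        have hAid : Aval * (1 - t) = s * mh + (1 - s) * c₀ - t * mf :=
          div_mul_cancel₀ _ h1t.ne'
        have hAbound : |Aval - c₀| ≤ ε := by
          have hnum : Aval - c₀ = (s * (mh - c₀) - t * (mf - c₀)) / (1 - t) := by
            rw [hAdef]; field_simp; ring
          rw [hnum, abs_div, abs_of_pos h1t, div_le_iff₀ h1t]
          have h5 : |s * (mh - c₀) - t * (mf - c₀)|
              ≤ s * |mh - c₀| + t * |mf - c₀| := by
            calc |s * (mh - c₀) - t * (mf - c₀)|
                ≤ |s * (mh - c₀)| + |t * (mf - c₀)| := abs_sub_le_sum' _ _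
              _ = s * |mh - c₀| + t * |mf - c₀| := by
                  rw [abs_mul s, abs_mul t, abs_of_pos hs0, abs_of_pos ht0]
          have h6 : s * |mh - c₀| + t * |mf - c₀| = t * B := by
            rw [hBdef, hsdef]; ring
          have h7 : (1 - t) * ε = ε * (1 - t) := by ring
          linarith
        have hx0c : c₀ - ε = u x₀ := by rw [hc₀def, hεdef]; ring
        have hx1c : c₀ + ε = u x₁ := by rw [hc₀def, hεdef]; ring
        have hAmem := abs_le.mp hAbound
        obtain ⟨a, haX, hau⟩ := exists_u_eq hX hu hx₀X hx₁X (r := Aval)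
          (by linarith [hAmem.1]) (by linarith [hAmem.2])
        have hFact : IsAct X (mixAct t f (constAct S a)) :=
          isAct_mix hX hf (isAct_const haX) ht0.le ht1.le
        have hHact : IsAct X (mixAct s h₀ (constAct S b)) :=
          isAct_mix hX hh₀ (isAct_const hbX) hs0.le hs1.le
        have hmF : minEU u C (mixAct t f (constAct S a)) = t * mf + (1 - t) * Aval := by
          rw [minEU_mix_const hCne hCP hu hf haX ht0.le ht1.le, hau]
        have hmH : minEU u C (mixAct s h₀ (constAct S b)) = s * mh + (1 - s) * c₀ := by
          rw [minEU_mix_const hCne hCP hu hh₀ hbX hs0.le hs1.le, hbu]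
        have hMF : maxEU u D (mixAct t f (constAct S a)) = t * Mf + (1 - t) * Aval := by
          rw [maxEU_mix_const hDne hDP hu hf haX ht0.le ht1.le, hau]
        have hMH : maxEU u D (mixAct s h₀ (constAct S b)) = s * Mh + (1 - s) * c₀ := by
          rw [maxEU_mix_const hDne hDP hu hh₀ hbX hs0.le hs1.le, hbu]
        have hmEq' : t * mf + (1 - t) * Aval = s * mh + (1 - s) * c₀ := by
          have h7 : (1 - t) * Aval = Aval * (1 - t) := by ring
          linarith [hAid]
        have hMEq' : t * Mf + (1 - t) * Aval = s * Mh + (1 - s) * c₀ := by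
          linear_combination hmEq' - t * hκid + (mh - Mh) * hsdef
        have hmEq : minEU u C (mixAct t f (constAct S a))
            = minEU u C (mixAct s h₀ (constAct S b)) := by rw [hmF, hmH]; exact hmEq'
        have hMEq : maxEU u D (mixAct t f (constAct S a))
            = maxEU u D (mixAct s h₀ (constAct S b)) := by rw [hMF, hMH]; exact hMEq'
        have hvEq := le_antisymm (hmono hFact hHact hmEq.le hMEq.le)
          (hmono hHact hFact hmEq.ge hMEq.ge)
        rw [v_mix hX hu hnc2 hasym hneg hax2 hax3 hax5 hcu hv hf haX ht0 ht1,
          v_mix hX hu hnc2 hasym hneg hax2 hax3 hax5 hcu hv hh₀ hbX hs0 hs1,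
          hau, hbu] at hvEq
        -- hvEq : t * v f + (1 - t) * Aval = s * vh + (1 - s) * c₀
        have e1 : t * Mf - t * v f = s * Mh - s * vh := by linarith [hvEq, hMEq']
        have e2 : s * Mh - s * vh = s * (α * (Mh - mh)) := by rw [hαid]; ring
        have e3 : s * (α * (Mh - mh)) = t * (α * (Mf - mf)) := by
          linear_combination α * t * hκid + α * (Mh - mh) * hsdef
        have e4 : t * (Mf - v f) = t * (α * (Mf - mf)) := by
          rw [mul_sub]; linarith [e1, e2, e3]
        have e5 : Mf - v f = α * (Mf - mf) := mul_left_cancel₀ ht0.ne' e4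
        have e6 : α * (Mf - mf) = α * Mf - α * mf := by ring
        have goal' : v f = α * mf + (1 - α) * Mf := by
          have e7 : (1 - α) * Mf = Mf - α * Mf := by ring
          linarith [e5, e6]
        exact goal'
    refine ⟨α, ⟨hα0, hα1⟩, fun f g hf hg => ?_⟩
    rw [hchar hf hg]
    simp only [alphaVal]
    rw [← hval f hf, ← hval g hg]
  · push_neg at hinc
    refine ⟨1, ⟨by norm_num, le_refl 1⟩, fun f g hf hg => ?_⟩
    have hvf : ∀ h, IsAct X h → v h = minEU u C h := fun h hh =>
      le_antisymm (le_trans (hsand h hh).2 (hinc h hh)) (hsand h hh).1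
    rw [hchar hf hg]
    simp only [alphaVal]
    rw [hvf f hf, hvf g hg]
    constructor <;> intro <;> linarith
lemma uniqueness_part {X : Set V} {u : V → ℝ} {Rstar : (S → V) → (S → V) → Prop}
    {C D : Set (MSet S → ℝ)} (hX : Convex ℝ X) (hu : IsAffineOn u X)
    (hCne : C.Nonempty) (hDne : D.Nonempty)
    (hCP : C ⊆ ProbCharges S) (hDP : D ⊆ ProbCharges S)
    {f₀ : S → V} (hf₀ : IsAct X f₀) (hlt₀ : minEU u C f₀ < maxEU u D f₀)
    {α β : ℝ} (hα0 : 0 ≤ α) (hα1 : α ≤ 1) (hβ0 : 0 ≤ β) (hβ1 : β ≤ 1)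
    (hA : ∀ f g, IsAct X f → IsAct X g →
      (Rstar f g ↔ alphaVal u C D α g < alphaVal u C D α f))
    (hB : ∀ f g, IsAct X f → IsAct X g →
      (Rstar f g ↔ alphaVal u C D β g < alphaVal u C D β f)) :
    α = β := by
  obtain ⟨s₁, s₂, hlo, hhi⟩ := act_argbounds hf₀ u
  have hmb := minEU_bounds hCne hCP hf₀ hlo hhi
  have hMb := maxEU_bounds hDne hDP hf₀ hlo hhi
  have hav : ∀ γ : ℝ, 0 ≤ γ → γ ≤ 1 →
      u (f₀ s₁) ≤ alphaVal u C D γ f₀ ∧ alphaVal u C D γ f₀ ≤ u (f₀ s₂) := by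
    intro γ h0 h1
    simp only [alphaVal]
    constructor <;> nlinarith [hmb.1, hmb.2, hMb.1, hMb.2]
  have havα := hav α hα0 hα1
  have havβ := hav β hβ0 hβ1
  have hsame : alphaVal u C D α f₀ = alphaVal u C D β f₀ := by
    by_contra hne2
    rcases lt_or_gt_of_ne hne2 with hlt | hgt
    · obtain ⟨x, hxX, hxu⟩ := exists_u_eq hX hu (hf₀.1 s₁) (hf₀.1 s₂)
        (r := (alphaVal u C D α f₀ + alphaVal u C D β f₀) / 2)
        (by linarith [havα.1]) (by linarith [havβ.2])
      have h1 : Rstar (constAct S x) f₀ := (hA _ _ (isAct_const hxX) hf₀).mpr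
        (by rw [alphaVal_const hCne hDne hCP hDP, hxu]; linarith)
      have h2 := (hB _ _ (isAct_const hxX) hf₀).mp h1
      rw [alphaVal_const hCne hDne hCP hDP, hxu] at h2
      linarith
    · obtain ⟨x, hxX, hxu⟩ := exists_u_eq hX hu (hf₀.1 s₁) (hf₀.1 s₂)
        (r := (alphaVal u C D α f₀ + alphaVal u C D β f₀) / 2)
        (by linarith [havβ.1]) (by linarith [havα.2])
      have h1 : Rstar (constAct S x) f₀ := (hB _ _ (isAct_const hxX) hf₀).mpr
        (by rw [alphaVal_const hCne hDne hCP hDP, hxu]; linarith)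
      have h2 := (hA _ _ (isAct_const hxX) hf₀).mp h1
      rw [alphaVal_const hCne hDne hCP hDP, hxu] at h2
      linarith
  have h2 : (α - β) * (minEU u C f₀ - maxEU u D f₀) = 0 := by
    simp only [alphaVal] at hsame
    linear_combination hsame
  rcases mul_eq_zero.mp h2 with h3 | h3
  · exact sub_eq_zero.mp h3
  · exfalso
    have := sub_eq_zero.mp h3
    linarith
/-- Theorem 3: `≻*` is an invariant biseparable extension of
the hope-and-prepare preference `≻` iff it admits an asymmetric `α`-MEU
representation `(u, C, D, α)`; and if `≻` is not complete, `α` is unique. -/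
theorem statement2 (X : Set V) (hX : Convex ℝ X) (hX2 : ∃ x ∈ X, ∃ y ∈ X, x ≠ y)
    (R Rstar : (S → V) → (S → V) → Prop) (u : V → ℝ) (C D : Set (MSet S → ℝ))
    (hrep : IsHPRep X R u C D) :
    ((InvBiseparable X Rstar ∧
        (∀ f g, IsAct X f → IsAct X g → R f g → Rstar f g)) ↔
      ∃ α ∈ Set.Icc (0 : ℝ) 1, ∀ f g, IsAct X f → IsAct X g →
        (Rstar f g ↔ alphaVal u C D α g < alphaVal u C D α f)) ∧
    ((∃ f, IsAct X f ∧ minEU u C f < maxEU u D f) →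
      ∀ α ∈ Set.Icc (0 : ℝ) 1, ∀ β ∈ Set.Icc (0 : ℝ) 1,
        (∀ f g, IsAct X f → IsAct X g →
          (Rstar f g ↔ alphaVal u C D α g < alphaVal u C D α f)) →
        (∀ f g, IsAct X f → IsAct X g →
          (Rstar f g ↔ alphaVal u C D β g < alphaVal u C D β f)) →
        α = β) := by
  constructor
  · constructor
    · rintro ⟨hIB, hext⟩
      exact forward hX hrep hIB hext
    · rintro ⟨α, ⟨hα0, hα1⟩, hrs⟩
      exact backward hX hrep hα0 hα1 hrs
  · rintro ⟨f₀, hf₀, hlt₀⟩ α ⟨hα0, hα1⟩ β ⟨hβ0, hβ1⟩ hA hB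
    obtain ⟨hu, hnc, hCne, hDne, hCP, hDP, _, _, _, _, hCD, hR⟩ := hrep
    exact uniqueness_part hX hu hCne hDne hCP hDP hf₀ hlt₀ hα0 hα1 hβ0 hβ1 hA hB

end Statement
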